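/- arXiv:2502.01026 — 5 statements merged into one kernel-verified Lean document; each statement's English description precedes it below -/
import Mathlib

section
/- Let E be the elliptic curve over the rational function field ℚ(T) defined by the Weierstrass equation y² = x(x² − x + T). Then every point of the group E(ℚ(T)) of ℚ(T)-rational points has finite order; that is, the Mordell–Weil group E(ℚ(T)) has rank 0. -/
namespace ZywinaAux

open Polynomial

/-- If `natDegree w ≤ k` and `coeff w k ≠ 0` then degree is exactly `k` and
the leading coefficient is `coeff w k`. -/
lemma lead_of_coeff {w : ℚ[X]} {k : ℕ} (h1 : w.natDegree ≤ k) (h2 : w.coeff k ≠ 0) :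
    w.natDegree = k ∧ w.leadingCoeff = w.coeff k := by
  have h3 : w.natDegree = k := le_antisymm h1 (le_natDegree_of_ne_zero h2)
  exact ⟨h3, by rw [leadingCoeff, h3]⟩

lemma isCoprime_of_forall_prime {u w : ℚ[X]} (hu : u ≠ 0)
    (h : ∀ π : ℚ[X], Prime π → π ∣ u → π ∣ w → False) : IsCoprime u w := by
  rw [← isRelPrime_iff_isCoprime]
  intro k hku hkw
  by_contra hk
  have hk0 : k ≠ 0 := fun h0 => hu (zero_dvd_iff.mp (h0 ▸ hku))
  obtain ⟨π, hπ, hπk⟩ := WfDvdMonoid.exists_irreducible_factor hk hk0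
  exact h π hπ.prime (hπk.trans hku) (hπk.trans hkw)

/-- From `a * g = b ^ 2` with `a, g` coprime and `leadingCoeff a` a square,
both factors are squares. -/
lemma sq_of_coprime_mul_sq {a g b : ℚ[X]} (ha : a ≠ 0) (hco : IsCoprime a g)
    (h : a * g = b ^ 2) {s : ℚ} (hlc : a.leadingCoeff = s ^ 2) :
    ∃ m n : ℚ[X], a = m ^ 2 ∧ g = n ^ 2 := by
  obtain ⟨m₀, hm₀⟩ := exists_associated_pow_of_mul_eq_pow' hco h
  obtain ⟨u, hu⟩ := hm₀
  obtain ⟨c, -, hc⟩ := Polynomial.isUnit_iff.mp u.isUnit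
  rw [← hc] at hu
  have hm₀0 : m₀ ≠ 0 := by rintro rfl; rw [← hu] at ha; simp at ha
  have hlc2 : a.leadingCoeff = c * m₀.leadingCoeff ^ 2 := by
    rw [← hu, leadingCoeff_mul, leadingCoeff_pow, leadingCoeff_C, mul_comm]
  have hlm : m₀.leadingCoeff ≠ 0 := leadingCoeff_ne_zero.mpr hm₀0
  set σ : ℚ := s / m₀.leadingCoeff with hσ
  have hcσ : c = σ ^ 2 := by
    have : σ ^ 2 = s ^ 2 / m₀.leadingCoeff ^ 2 := by rw [hσ, div_pow]
    rw [this, ← hlc, hlc2]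
    field_simp
  have ham : a = (C σ * m₀) ^ 2 := by
    rw [mul_pow, ← map_pow, ← hcσ, ← hu]; ring
  set m := C σ * m₀ with hm
  have hmdvd : m ∣ b := by
    refine (IsIntegrallyClosed.pow_dvd_pow_iff (two_ne_zero)).mp ⟨g, ?_⟩
    rw [← h, ← ham]
  obtain ⟨n, hn⟩ := hmdvd
  refine ⟨m, n, ham, ?_⟩
  have : a * g = a * n ^ 2 := by rw [h, hn, ham]; ring
  exact mul_left_cancel₀ ha this

/-- coprime splitting of a fourth power. -/
lemma quartic_split {u w q : ℚ[X]} (hq : q ≠ 0) (hco : IsCoprime u w)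
    (h : u * w = q ^ 4) :
    ∃ (c : ℚ) (e d : ℚ[X]), c ≠ 0 ∧ q = e * d ∧ w = C c * e ^ 4 ∧ u * C c = d ^ 4 ∧
      IsCoprime e d := by
  obtain ⟨e, he⟩ := exists_associated_pow_of_mul_eq_pow' hco.symm (by rwa [mul_comm] at h)
  obtain ⟨v, hv⟩ := he
  obtain ⟨c, -, hc⟩ := Polynomial.isUnit_iff.mp v.isUnit
  rw [← hc] at hv
  have hw0 : w ≠ 0 := by
    rintro rfl; rw [mul_zero] at h; exact hq (pow_eq_zero_iff four_ne_zero |>.mp h.symm)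
  have hc0 : c ≠ 0 := by rintro rfl; rw [map_zero, mul_zero] at hv; exact hw0 hv.symm
  have he0 : e ≠ 0 := by rintro rfl; rw [zero_pow four_ne_zero, zero_mul] at hv; exact hw0 hv.symm
  have hedvd : e ∣ q := by
    refine (IsIntegrallyClosed.pow_dvd_pow_iff four_ne_zero).mp ?_
    exact dvd_trans ⟨C c, by rw [← hv]⟩ (Dvd.intro_left u h)
  obtain ⟨d, hd⟩ := hedvd
  have hucd : u * C c = d ^ 4 := by
    have h4 : e ^ 4 * (u * C c) = e ^ 4 * d ^ 4 := by
      rw [show e ^ 4 * (u * C c) = u * (e ^ 4 * C c) by ring, hv, h, hd]; ring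
    exact mul_left_cancel₀ (pow_ne_zero _ he0) h4
  have hcC : C c * C c⁻¹ = 1 := by
    rw [← map_mul, mul_inv_cancel₀ hc0, map_one]
  have hueq : u = C c⁻¹ * d ^ 4 := by
    calc u = u * (C c * C c⁻¹) := by rw [hcC, mul_one]
    _ = (u * C c) * C c⁻¹ := by ring
    _ = C c⁻¹ * d ^ 4 := by rw [hucd]; ring
  have hddvdu : d ∣ u := hueq ▸ Dvd.dvd.mul_left (dvd_pow_self d four_ne_zero) _
  have hcoed : IsCoprime e d :=
    ((hco.of_isCoprime_of_dvd_left hddvdu).of_isCoprime_of_dvd_right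
      ⟨e ^ 3 * C c, by rw [← hv]; ring⟩).symm
  exact ⟨c, e, d, hc0, hd, by rw [← hv]; ring, hucd, hcoed⟩

lemma two_eq_C : (2 : ℚ[X]) = C 2 := (map_ofNat C 2).symm
lemma four_eq_C : (4 : ℚ[X]) = C 4 := (map_ofNat C 4).symm

/-- The common descent step for the two 2-isogeny descents. -/
lemma core {n p q : ℚ[X]} (c₂ : ℚ) (L : ℚ[X]) (hL : L.natDegree = 1)
    (hq : q ≠ 0) (hpq : IsCoprime p q)
    (h : n ^ 2 = p ^ 4 + C c₂ * p ^ 2 * q ^ 2 + L * q ^ 4) :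
    ∃ (γ : ℚ) (e d : ℚ[X]), γ ≠ 0 ∧ d ≠ 0 ∧ IsCoprime (C γ * e) d ∧
      d.natDegree < q.natDegree ∧
      (2 * C γ * p) ^ 2
        = (C γ * e) ^ 4 - 2 * C c₂ * (C γ * e) ^ 2 * d ^ 2 + (C c₂ ^ 2 - 4 * L) * d ^ 4 := by
  have hL0 : L ≠ 0 := fun h0 => by simp [h0] at hL
  have hlcL : L.coeff 1 ≠ 0 := by
    have h1 := leadingCoeff_ne_zero.mpr hL0
    rwa [leadingCoeff, hL] at h1
  have hq4 : (q ^ 4 : ℚ[X]) ≠ 0 := pow_ne_zero _ hq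
  have hlcq : q.leadingCoeff ≠ 0 := leadingCoeff_ne_zero.mpr hq
  have hLq4deg : (L * q ^ 4).natDegree = 1 + 4 * q.natDegree := by
    rw [natDegree_mul hL0 hq4, hL, natDegree_pow]
  have hLq4coeff : (L * q ^ 4).coeff (1 + 4 * q.natDegree) = L.coeff 1 * q.leadingCoeff ^ 4 := by
    have := coeff_natDegree (p := L * q ^ 4)
    rw [hLq4deg] at this
    rw [this, leadingCoeff_mul, leadingCoeff_pow, leadingCoeff, hL]
  have hmid_le : (C c₂ * p ^ 2 * q ^ 2).natDegree ≤ 2 * p.natDegree + 2 * q.natDegree := by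
    calc (C c₂ * p ^ 2 * q ^ 2).natDegree
        ≤ (C c₂ * p ^ 2).natDegree + (q ^ 2).natDegree := natDegree_mul_le
      _ ≤ (C c₂).natDegree + (p ^ 2).natDegree + (q ^ 2).natDegree :=
          Nat.add_le_add_right natDegree_mul_le _
      _ ≤ 2 * p.natDegree + 2 * q.natDegree := by
          rw [natDegree_C, natDegree_pow, natDegree_pow]; omega
  -- Step 1 : q has degree smaller than p
  have hPQ : q.natDegree < p.natDegree := by
    by_contra hle
    push_neg at hle
    have hb1 : (p ^ 4).natDegree ≤ 4 * q.natDegree := by rw [natDegree_pow]; omega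
    have hbound : (p ^ 4 + C c₂ * p ^ 2 * q ^ 2 + L * q ^ 4).natDegree ≤ 1 + 4 * q.natDegree := by
      refine le_trans (natDegree_add_le _ _) ?_
      refine max_le (le_trans (natDegree_add_le _ _) (max_le ?_ ?_)) (le_of_eq hLq4deg)
      · omega
      · omega
    have hcoeff : (p ^ 4 + C c₂ * p ^ 2 * q ^ 2 + L * q ^ 4).coeff (1 + 4 * q.natDegree)
        = L.coeff 1 * q.leadingCoeff ^ 4 := by
      rw [coeff_add, coeff_add, hLq4coeff,
        coeff_eq_zero_of_natDegree_lt (lt_of_le_of_lt hb1 (by omega)),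
        coeff_eq_zero_of_natDegree_lt (lt_of_le_of_lt hmid_le (by omega))]
      ring
    have hcne : (p ^ 4 + C c₂ * p ^ 2 * q ^ 2 + L * q ^ 4).coeff (1 + 4 * q.natDegree) ≠ 0 := by
      rw [hcoeff]; exact mul_ne_zero hlcL (pow_ne_zero _ hlcq)
    obtain ⟨hdeg, -⟩ := lead_of_coeff hbound hcne
    have hn2 : (n ^ 2).natDegree = 1 + 4 * q.natDegree := by rw [h, hdeg]
    rw [natDegree_pow] at hn2
    omega
  have hp0 : p ≠ 0 := by
    rintro rfl
    simp only [natDegree_zero] at hPQ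
    omega
  have hlcp : p.leadingCoeff ≠ 0 := leadingCoeff_ne_zero.mpr hp0
  -- Step 2 : degree and leading coefficient of the right hand side
  have hb3 : (L * q ^ 4).natDegree < 4 * p.natDegree := by rw [hLq4deg]; omega
  have hRb : (p ^ 4 + C c₂ * p ^ 2 * q ^ 2 + L * q ^ 4).natDegree ≤ 4 * p.natDegree := by
    refine le_trans (natDegree_add_le _ _) (max_le (le_trans (natDegree_add_le _ _)
      (max_le ?_ ?_)) (le_of_lt hb3))
    · rw [natDegree_pow]
    · omega
  have hp4coeff : (p ^ 4).coeff (4 * p.natDegree) = p.leadingCoeff ^ 4 := by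
    have := coeff_natDegree (p := p ^ 4)
    rw [natDegree_pow] at this
    rw [this, leadingCoeff_pow]
  have hRcoeff : (p ^ 4 + C c₂ * p ^ 2 * q ^ 2 + L * q ^ 4).coeff (4 * p.natDegree)
      = p.leadingCoeff ^ 4 := by
    rw [coeff_add, coeff_add, hp4coeff,
      coeff_eq_zero_of_natDegree_lt (lt_of_le_of_lt hmid_le (by omega)),
      coeff_eq_zero_of_natDegree_lt hb3]
    ring
  have hRne : (p ^ 4 + C c₂ * p ^ 2 * q ^ 2 + L * q ^ 4).coeff (4 * p.natDegree) ≠ 0 := by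
    rw [hRcoeff]; exact pow_ne_zero _ hlcp
  obtain ⟨hRdeg, hRlc⟩ := lead_of_coeff hRb hRne
  have hn0 : n ≠ 0 := by
    rintro rfl
    rw [eq_comm] at h
    have := hRne
    rw [h] at this
    simp at this
  have hndeg : n.natDegree = 2 * p.natDegree := by
    have hn2 : (n ^ 2).natDegree = 4 * p.natDegree := by rw [h, hRdeg]
    rw [natDegree_pow] at hn2
    omega
  have hlcn2 : n.leadingCoeff ^ 2 = p.leadingCoeff ^ 4 := by
    have h1 : (n ^ 2).leadingCoeff = p.leadingCoeff ^ 4 := by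
      rw [h, hRlc, hRcoeff]
    rwa [leadingCoeff_pow] at h1
  -- Step 3 : normalise the sign of n
  obtain ⟨N, hN2, hNdeg, hNlc⟩ : ∃ N : ℚ[X], N ^ 2 = n ^ 2 ∧
      N.natDegree = 2 * p.natDegree ∧ N.leadingCoeff = p.leadingCoeff ^ 2 := by
    by_cases hcs : n.leadingCoeff = p.leadingCoeff ^ 2
    · exact ⟨n, rfl, hndeg, hcs⟩
    · refine ⟨-n, by ring, by rwa [natDegree_neg], ?_⟩
      have h2 : (n.leadingCoeff - p.leadingCoeff ^ 2) * (n.leadingCoeff + p.leadingCoeff ^ 2)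
          = 0 := by linear_combination hlcn2
      rcases mul_eq_zero.mp h2 with h3 | h3
      · exact absurd (by linarith [sub_eq_zero.mp h3]) hcs
      · rw [leadingCoeff_neg]; linarith
  have hNh : N ^ 2 = p ^ 4 + C c₂ * p ^ 2 * q ^ 2 + L * q ^ 4 := hN2.trans h
  -- Step 4 : the factorisation u * w = M * q ^ 4
  set u := 2 * N - (2 * p ^ 2 + C c₂ * q ^ 2) with hu_def
  set w := 2 * N + (2 * p ^ 2 + C c₂ * q ^ 2) with hw_def
  have huw : u * w = (4 * L - C c₂ ^ 2) * q ^ 4 := by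
    rw [hu_def, hw_def]
    linear_combination (4 : ℚ[X]) * hNh
  have hMne : (4 * L - C c₂ ^ 2 : ℚ[X]) ≠ 0 := by
    intro h0
    have h1 : (4 * L - C c₂ ^ 2 : ℚ[X]).coeff 1 = 4 * L.coeff 1 := by
      rw [coeff_sub, ← map_pow, coeff_C, four_eq_C, coeff_C_mul]
      norm_num
    rw [h0] at h1
    simp only [coeff_zero] at h1
    exact hlcL (by linarith)
  have hMdeg : (4 * L - C c₂ ^ 2 : ℚ[X]).natDegree = 1 := by
    have hb : (4 * L - C c₂ ^ 2 : ℚ[X]).natDegree ≤ 1 := by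
      refine le_trans (natDegree_sub_le _ _) (max_le ?_ ?_)
      · rw [four_eq_C]
        refine le_trans natDegree_mul_le ?_
        rw [natDegree_C, hL]
      · rw [← map_pow, natDegree_C]; omega
    have hc : (4 * L - C c₂ ^ 2 : ℚ[X]).coeff 1 = 4 * L.coeff 1 := by
      rw [coeff_sub, ← map_pow, coeff_C, four_eq_C, coeff_C_mul]
      norm_num
    exact (lead_of_coeff hb (by rw [hc]; exact mul_ne_zero (by norm_num) hlcL)).1
  have hMprime : Prime (4 * L - C c₂ ^ 2 : ℚ[X]) :=
    prime_of_degree_eq_one ((degree_eq_iff_natDegree_eq hMne).mpr hMdeg)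
  have hMq40 : (4 * L - C c₂ ^ 2 : ℚ[X]) * q ^ 4 ≠ 0 := mul_ne_zero hMne hq4
  have hu0 : u ≠ 0 := by rintro h0; rw [h0, zero_mul] at huw; exact hMq40 huw.symm
  have hw0 : w ≠ 0 := by rintro h0; rw [h0, mul_zero] at huw; exact hMq40 huw.symm
  -- Step 5 : degree and leading coefficient of w
  have hwb : w.natDegree ≤ 2 * p.natDegree := by
    rw [hw_def]
    refine le_trans (natDegree_add_le _ _) (max_le ?_ (le_trans (natDegree_add_le _ _)
      (max_le ?_ ?_)))
    · rw [two_eq_C]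
      refine le_trans natDegree_mul_le ?_
      rw [natDegree_C, hNdeg]; omega
    · rw [two_eq_C]
      refine le_trans natDegree_mul_le ?_
      rw [natDegree_C, natDegree_pow]; omega
    · refine le_trans natDegree_mul_le ?_
      rw [natDegree_C, natDegree_pow]; omega
  have hwc : w.coeff (2 * p.natDegree) = 4 * p.leadingCoeff ^ 2 := by
    have hNc : N.coeff (2 * p.natDegree) = p.leadingCoeff ^ 2 := by
      rw [← hNdeg, coeff_natDegree, hNlc]
    have hpc : (p ^ 2).coeff (2 * p.natDegree) = p.leadingCoeff ^ 2 := by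
      have h1 := coeff_natDegree (p := p ^ 2)
      rw [natDegree_pow] at h1
      rw [h1, leadingCoeff_pow]
    have hqc : (q ^ 2).coeff (2 * p.natDegree) = 0 :=
      coeff_eq_zero_of_natDegree_lt (by rw [natDegree_pow]; omega)
    rw [hw_def, coeff_add, coeff_add, two_eq_C, coeff_C_mul, coeff_C_mul, coeff_C_mul,
      hNc, hpc, hqc]
    ring
  obtain ⟨hwdeg, hwlc⟩ := lead_of_coeff hwb (by rw [hwc]; positivity)
  -- Step 6 : u and w are coprime
  have h2unit : IsUnit (2 : ℚ[X]) := by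
    rw [two_eq_C]; exact Polynomial.isUnit_C.mpr (by norm_num)
  have hcop : IsCoprime u w := by
    refine isCoprime_of_forall_prime hu0 (fun π hπ hπu hπw => ?_)
    have hπN : π ∣ N := by
      have hdvd : π ∣ 2 * (2 * N) := by
        have : u + w = 2 * (2 * N) := by rw [hu_def, hw_def]; ring
        exact this ▸ dvd_add hπu hπw
      have h1 := (hπ.2.2 _ _ hdvd).resolve_left
        (fun hd => hπ.not_unit (isUnit_of_dvd_unit hd h2unit))
      exact (hπ.2.2 _ _ h1).resolve_left
        (fun hd => hπ.not_unit (isUnit_of_dvd_unit hd h2unit))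
    have hπV : π ∣ 2 * p ^ 2 + C c₂ * q ^ 2 := by
      have hdvd : π ∣ 2 * (2 * p ^ 2 + C c₂ * q ^ 2) := by
        have : w - u = 2 * (2 * p ^ 2 + C c₂ * q ^ 2) := by rw [hu_def, hw_def]; ring
        exact this ▸ dvd_sub hπw hπu
      exact (hπ.2.2 _ _ hdvd).resolve_left
        (fun hd => hπ.not_unit (isUnit_of_dvd_unit hd h2unit))
    have hπq : π ∣ q → False := by
      intro hq'
      have h1 : π ∣ 2 * p ^ 2 := by
        have he : 2 * p ^ 2 = (2 * p ^ 2 + C c₂ * q ^ 2) - C c₂ * q ^ 2 := by ring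
        rw [he]
        exact dvd_sub hπV ((dvd_pow hq' two_ne_zero).mul_left (C c₂))
      have h2 : π ∣ p ^ 2 := (hπ.2.2 _ _ h1).resolve_left
        (fun hd => hπ.not_unit (isUnit_of_dvd_unit hd h2unit))
      have h3 : π ∣ p := hπ.dvd_of_dvd_pow h2
      exact hπ.not_unit (hpq.isUnit_of_dvd' h3 hq')
    have hπMq : π ∣ (4 * L - C c₂ ^ 2) * q ^ 4 := huw ▸ hπu.mul_right w
    rcases hπ.2.2 _ _ hπMq with hπM | hπq4
    · have hassoc := hπ.associated_of_dvd hMprime hπM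
      have hMu : (4 * L - C c₂ ^ 2) ∣ u := hassoc.symm.dvd.trans hπu
      have hMw : (4 * L - C c₂ ^ 2) ∣ w := hassoc.symm.dvd.trans hπw
      obtain ⟨k1, hk1⟩ := hMu
      obtain ⟨k2, hk2⟩ := hMw
      have hq4dvd : (4 * L - C c₂ ^ 2) ∣ q ^ 4 := by
        refine ⟨k1 * k2, mul_left_cancel₀ hMne ?_⟩
        rw [← huw, hk1, hk2]; ring
      exact hπq (hπ.dvd_of_dvd_pow (hπM.trans hq4dvd))
    · exact hπq (hπ.dvd_of_dvd_pow hπq4)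
  -- Step 7 : the prime M divides u (it cannot divide w for parity reasons)
  have hMdvd : (4 * L - C c₂ ^ 2) ∣ u * w := ⟨q ^ 4, huw⟩
  have hMu : (4 * L - C c₂ ^ 2) ∣ u := by
    rcases hMprime.2.2 _ _ hMdvd with hMu | hMw
    · exact hMu
    · exfalso
      obtain ⟨w', hw'⟩ := hMw
      have hw'0 : w' ≠ 0 := by rintro rfl; rw [mul_zero] at hw'; exact hw0 hw'
      have huw' : u * w' = q ^ 4 := by
        have : (4 * L - C c₂ ^ 2) * (u * w') = (4 * L - C c₂ ^ 2) * q ^ 4 := by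
          rw [← huw, hw']; ring
        exact mul_left_cancel₀ hMne this
      have hcop' : IsCoprime u w' :=
        hcop.of_isCoprime_of_dvd_right ⟨4 * L - C c₂ ^ 2, by rw [hw']; ring⟩
      obtain ⟨c, e, d, hc0, hqed, hweq, -, -⟩ := quartic_split hq hcop' huw'
      have hdegw' : w'.natDegree = 4 * e.natDegree := by
        rw [hweq, natDegree_C_mul (by exact_mod_cast hc0), natDegree_pow]
      have : w.natDegree = 1 + 4 * e.natDegree := by
        rw [hw', natDegree_mul hMne hw'0, hMdeg, hdegw']
      omega
  -- Step 8 : split the fourth power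
  obtain ⟨u', hu'⟩ := hMu
  have huw2 : u' * w = q ^ 4 := by
    have : (4 * L - C c₂ ^ 2) * (u' * w) = (4 * L - C c₂ ^ 2) * q ^ 4 := by
      rw [← huw, hu']; ring
    exact mul_left_cancel₀ hMne this
  have hcop2 : IsCoprime u' w :=
    hcop.of_isCoprime_of_dvd_left ⟨4 * L - C c₂ ^ 2, by rw [hu']; ring⟩
  obtain ⟨c, e, d, hc0, hqed, hweq, hucd, hcoed⟩ := quartic_split hq hcop2 huw2
  have he0 : e ≠ 0 := by rintro rfl; rw [zero_mul] at hqed; exact hq hqed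
  have hd0 : d ≠ 0 := by rintro rfl; rw [mul_zero] at hqed; exact hq hqed
  have hlce : e.leadingCoeff ≠ 0 := leadingCoeff_ne_zero.mpr he0
  have hdege : 2 * p.natDegree = 4 * e.natDegree := by
    rw [← hwdeg, hweq, natDegree_C_mul (by exact_mod_cast hc0), natDegree_pow]
  have hdegq : q.natDegree = e.natDegree + d.natDegree := by
    rw [hqed, natDegree_mul he0 hd0]
  have hdlt : d.natDegree < q.natDegree := by omega
  -- Step 9 : the unit c is a square
  set γ : ℚ := 2 * p.leadingCoeff / e.leadingCoeff ^ 2 with hγ_def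
  have hγ0 : γ ≠ 0 := by
    rw [hγ_def]
    exact div_ne_zero (mul_ne_zero two_ne_zero hlcp) (pow_ne_zero _ hlce)
  have hcγ : c = γ ^ 2 := by
    have hlcw : w.leadingCoeff = c * e.leadingCoeff ^ 4 := by
      rw [hweq, leadingCoeff_mul, leadingCoeff_C, leadingCoeff_pow]
    have h4 : 4 * p.leadingCoeff ^ 2 = c * e.leadingCoeff ^ 4 := by
      rw [← hwc, ← hwlc, hlcw]
    rw [hγ_def, div_pow, eq_div_iff (pow_ne_zero _ (pow_ne_zero _ hlce))]
    linear_combination -h4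
  -- Step 10 : the final identity
  have hCc : (C c : ℚ[X]) = C γ ^ 2 := by rw [hcγ, map_pow]
  have E2 : w = C γ ^ 2 * e ^ 4 := by rw [hweq, hCc]
  have E3 : C γ ^ 2 * u = (4 * L - C c₂ ^ 2) * d ^ 4 := by
    rw [hu']
    calc C γ ^ 2 * ((4 * L - C c₂ ^ 2) * u')
        = (4 * L - C c₂ ^ 2) * (u' * C c) := by rw [hCc]; ring
      _ = (4 * L - C c₂ ^ 2) * d ^ 4 := by rw [hucd]
  have hwu : w - u = 2 * (2 * p ^ 2 + C c₂ * q ^ 2) := by rw [hu_def, hw_def]; ring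
  refine ⟨γ, e, d, hγ0, hd0, ?_, hdlt, ?_⟩
  · have : IsCoprime e d := hcoed
    exact (isCoprime_mul_unit_left_left (Polynomial.isUnit_C.mpr (isUnit_iff_ne_zero.mpr hγ0)) e d).mpr this
  · rw [hqed] at hwu
    linear_combination (-(C γ ^ 2)) * hwu + (C γ ^ 2) * E2 - E3

lemma deg_one_sub_four_X : (1 - 4 * X : ℚ[X]).natDegree = 1 := by
  have h1 : (1 - 4 * X : ℚ[X]) = C (-4) * X + C 1 := by
    rw [map_neg, map_one, ← four_eq_C]; ring
  rw [h1, natDegree_linear (by norm_num)]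

lemma one_sub_four_X_ne : (1 - 4 * X : ℚ[X]) ≠ 0 := fun h0 => by
  have := deg_one_sub_four_X
  rw [h0] at this
  simp at this

/-- Descent step from the quartic `y² = x⁴ - x²z² + Txz⁴` to the dual one. -/
lemma step1 {n p q : ℚ[X]} (hq : q ≠ 0) (hpq : IsCoprime p q)
    (h : n ^ 2 = p ^ 4 - p ^ 2 * q ^ 2 + X * q ^ 4) :
    ∃ (n' p' d : ℚ[X]), d ≠ 0 ∧ IsCoprime p' d ∧ d.natDegree < q.natDegree ∧
      n' ^ 2 = p' ^ 4 + 2 * p' ^ 2 * d ^ 2 + (1 - 4 * X) * d ^ 4 := by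
  have h' : n ^ 2 = p ^ 4 + C (-1) * p ^ 2 * q ^ 2 + X * q ^ 4 := by
    rw [map_neg, map_one]; linear_combination h
  obtain ⟨γ, e, d, hγ, hd, hco, hlt, hG⟩ := core (-1) X natDegree_X hq hpq h'
  refine ⟨2 * C γ * p, C γ * e, d, hd, hco, hlt, ?_⟩
  rw [map_neg, map_one] at hG
  linear_combination hG

/-- Descent step from the dual quartic back to the first one. -/
lemma step2 {n p q : ℚ[X]} (hq : q ≠ 0) (hpq : IsCoprime p q)
    (h : n ^ 2 = p ^ 4 + 2 * p ^ 2 * q ^ 2 + (1 - 4 * X) * q ^ 4) :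
    ∃ (n' p' d : ℚ[X]), d ≠ 0 ∧ IsCoprime p' d ∧ d.natDegree < q.natDegree ∧
      n' ^ 2 = p' ^ 4 - p' ^ 2 * d ^ 2 + X * d ^ 4 := by
  have h' : n ^ 2 = p ^ 4 + C 2 * p ^ 2 * q ^ 2 + (1 - 4 * X) * q ^ 4 := by
    rw [← two_eq_C]; linear_combination h
  obtain ⟨γ, e, d, hγ, hd, hco, hlt, hG⟩ := core 2 (1 - 4 * X) deg_one_sub_four_X hq hpq h'
  have hβ : γ / 2 * 2 = γ := by field_simp
  have hγ2 : γ = 2 * (γ / 2) := by field_simp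
  have hβ0 : γ / 2 ≠ 0 := by
    intro h0
    rw [h0, mul_zero] at hγ2
    exact hγ hγ2
  refine ⟨C (γ / 2) * p, C (γ / 2) * e, d, hd, ?_, hlt, ?_⟩
  · exact (isCoprime_mul_unit_left_left (Polynomial.isUnit_C.mpr
      (isUnit_iff_ne_zero.mpr hβ0)) e d).mpr
      ((isCoprime_mul_unit_left_left (Polynomial.isUnit_C.mpr
      (isUnit_iff_ne_zero.mpr hγ)) e d).mp hco)
  · rw [hγ2, map_mul, ← two_eq_C] at hG
    have h16 : (16 : ℚ[X]) * ((C (γ / 2) * p) ^ 2)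
        = 16 * ((C (γ / 2) * e) ^ 4 - (C (γ / 2) * e) ^ 2 * d ^ 2 + X * d ^ 4) := by
      linear_combination hG
    exact mul_left_cancel₀ (by norm_num : (16 : ℚ[X]) ≠ 0) h16

/-- The two quartics have no nontrivial points, by complete descent. -/
lemma key (k : ℕ) : ∀ n p q : ℚ[X], q ≠ 0 → IsCoprime p q → q.natDegree ≤ k →
    n ^ 2 ≠ p ^ 4 - p ^ 2 * q ^ 2 + X * q ^ 4 ∧
    n ^ 2 ≠ p ^ 4 + 2 * p ^ 2 * q ^ 2 + (1 - 4 * X) * q ^ 4 := by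
  induction k with
  | zero =>
    intro n p q hq hpq hdeg
    constructor <;> intro h
    · obtain ⟨n', p', d, hd, -, hlt, -⟩ := step1 hq hpq h
      omega
    · obtain ⟨n', p', d, hd, -, hlt, -⟩ := step2 hq hpq h
      omega
  | succ k ih =>
    intro n p q hq hpq hdeg
    constructor <;> intro h
    · obtain ⟨n', p', d, hd, hco, hlt, heq⟩ := step1 hq hpq h
      exact (ih n' p' d hd hco (by omega)).2 heq
    · obtain ⟨n', p', d, hd, hco, hlt, heq⟩ := step2 hq hpq h
      exact (ih n' p' d hd hco (by omega)).1 heq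

/-- A nonzero `a` coprime to `f` cannot satisfy `b² = a(a² - af² + Xf⁴)`. -/
lemma layer0 {a b f : ℚ[X]} (ha : a ≠ 0) (hf : f ≠ 0) (hco : IsCoprime a f)
    (h : b ^ 2 = a * (a ^ 2 - a * f ^ 2 + X * f ^ 4)) : False := by
  set g : ℚ[X] := a ^ 2 - a * f ^ 2 + X * f ^ 4 with hg_def
  have hlcf : f.leadingCoeff ≠ 0 := leadingCoeff_ne_zero.mpr hf
  have hlca : a.leadingCoeff ≠ 0 := leadingCoeff_ne_zero.mpr ha
  -- g is nonzero
  have hg0 : g ≠ 0 := by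
    intro h0
    have hid : (2 * a - f ^ 2) ^ 2 = f ^ 4 * (1 - 4 * X) := by
      have h0' : a ^ 2 - a * f ^ 2 + X * f ^ 4 = 0 := by rw [← hg_def, h0]
      linear_combination (4 : ℚ[X]) * h0'
    have hrne : (f ^ 4 * (1 - 4 * X) : ℚ[X]) ≠ 0 :=
      mul_ne_zero (pow_ne_zero _ hf) one_sub_four_X_ne
    have hlne : (2 * a - f ^ 2 : ℚ[X]) ≠ 0 := by
      intro h1
      rw [h1] at hid
      exact hrne (by rw [← hid]; norm_num)
    have hdeg : ((2 * a - f ^ 2 : ℚ[X]) ^ 2).natDegree = (f ^ 4 * (1 - 4 * X) : ℚ[X]).natDegree := by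
      rw [hid]
    rw [natDegree_pow, natDegree_mul (pow_ne_zero _ hf) one_sub_four_X_ne,
      natDegree_pow, deg_one_sub_four_X] at hdeg
    omega
  have hb0 : b ≠ 0 := by
    rintro rfl
    exact (mul_ne_zero ha hg0) (by rw [← h]; ring)
  have hlcb : b.leadingCoeff ≠ 0 := leadingCoeff_ne_zero.mpr hb0
  -- the leading coefficient of a is a square
  obtain ⟨s, hs⟩ : ∃ s : ℚ, a.leadingCoeff = s ^ 2 := by
    have hdegsum : a.natDegree + g.natDegree = 2 * b.natDegree := by
      have h1 : (b ^ 2).natDegree = (a * g).natDegree := by rw [h]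
      rw [natDegree_pow, natDegree_mul ha hg0] at h1
      omega
    rcases lt_trichotomy (a.natDegree) (2 * f.natDegree + 1) with hA | hA | hA
    · -- a.natDegree ≤ 2 * f.natDegree : dominant term X * f^4
      have hXf4deg : (X * f ^ 4 : ℚ[X]).natDegree = 1 + 4 * f.natDegree := by
        rw [natDegree_mul X_ne_zero (pow_ne_zero _ hf), natDegree_X, natDegree_pow]
      have hgb : g.natDegree ≤ 1 + 4 * f.natDegree := by
        rw [hg_def]
        refine le_trans (natDegree_add_le _ _) (max_le (le_trans (natDegree_sub_le _ _)
          (max_le ?_ ?_)) (le_of_eq hXf4deg))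
        · rw [natDegree_pow]; omega
        · refine le_trans natDegree_mul_le ?_
          rw [natDegree_pow]; omega
      have hgc : g.coeff (1 + 4 * f.natDegree) = f.leadingCoeff ^ 4 := by
        have hXc : (X * f ^ 4 : ℚ[X]).coeff (1 + 4 * f.natDegree) = f.leadingCoeff ^ 4 := by
          have h1 := coeff_natDegree (p := (X * f ^ 4 : ℚ[X]))
          rw [hXf4deg] at h1
          rw [h1, leadingCoeff_mul, leadingCoeff_X, leadingCoeff_pow, one_mul]
        rw [hg_def, coeff_add, coeff_sub, hXc,
          coeff_eq_zero_of_natDegree_lt (show (a ^ 2).natDegree < 1 + 4 * f.natDegree by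
            rw [natDegree_pow]; omega),
          coeff_eq_zero_of_natDegree_lt (lt_of_le_of_lt (natDegree_mul_le (p := a) (q := f ^ 2))
            (by rw [natDegree_pow]; omega))]
        ring
      obtain ⟨hgdeg, hglc⟩ := lead_of_coeff hgb (by rw [hgc]; exact pow_ne_zero _ hlcf)
      refine ⟨b.leadingCoeff / f.leadingCoeff ^ 2, ?_⟩
      have hl : b.leadingCoeff ^ 2 = a.leadingCoeff * f.leadingCoeff ^ 4 := by
        have h1 : (b ^ 2).leadingCoeff = (a * g).leadingCoeff := by rw [h]
        rw [leadingCoeff_pow, leadingCoeff_mul, hglc, hgc] at h1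
        exact h1
      rw [div_pow, eq_div_iff (pow_ne_zero _ (pow_ne_zero _ hlcf))]
      linear_combination -hl
    · -- impossible middle case by parity
      exfalso
      have hgb : g.natDegree ≤ 2 * a.natDegree := by
        rw [hg_def]
        refine le_trans (natDegree_add_le _ _) (max_le (le_trans (natDegree_sub_le _ _)
          (max_le ?_ ?_)) ?_)
        · rw [natDegree_pow]
        · refine le_trans natDegree_mul_le ?_
          rw [natDegree_pow]; omega
        · refine le_trans natDegree_mul_le ?_
          rw [natDegree_X, natDegree_pow]; omega
      have hgc : g.coeff (2 * a.natDegree) = a.leadingCoeff ^ 2 := by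
        have hac : (a ^ 2).coeff (2 * a.natDegree) = a.leadingCoeff ^ 2 := by
          have h1 := coeff_natDegree (p := a ^ 2)
          rw [natDegree_pow] at h1
          rw [h1, leadingCoeff_pow]
        rw [hg_def, coeff_add, coeff_sub, hac,
          coeff_eq_zero_of_natDegree_lt (lt_of_le_of_lt (natDegree_mul_le (p := a) (q := f ^ 2))
            (by rw [natDegree_pow]; omega)),
          coeff_eq_zero_of_natDegree_lt (lt_of_le_of_lt (natDegree_mul_le (p := X) (q := f ^ 4))
            (by rw [natDegree_X, natDegree_pow]; omega))]
        ring
      obtain ⟨hgdeg, -⟩ := lead_of_coeff hgb (by rw [hgc]; exact pow_ne_zero _ hlca)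
      omega
    · -- a.natDegree ≥ 2 * f.natDegree + 2 : dominant term a^2
      have hgb : g.natDegree ≤ 2 * a.natDegree := by
        rw [hg_def]
        refine le_trans (natDegree_add_le _ _) (max_le (le_trans (natDegree_sub_le _ _)
          (max_le ?_ ?_)) ?_)
        · rw [natDegree_pow]
        · refine le_trans natDegree_mul_le ?_
          rw [natDegree_pow]; omega
        · refine le_trans natDegree_mul_le ?_
          rw [natDegree_X, natDegree_pow]; omega
      have hgc : g.coeff (2 * a.natDegree) = a.leadingCoeff ^ 2 := by
        have hac : (a ^ 2).coeff (2 * a.natDegree) = a.leadingCoeff ^ 2 := by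
          have h1 := coeff_natDegree (p := a ^ 2)
          rw [natDegree_pow] at h1
          rw [h1, leadingCoeff_pow]
        rw [hg_def, coeff_add, coeff_sub, hac,
          coeff_eq_zero_of_natDegree_lt (lt_of_le_of_lt (natDegree_mul_le (p := a) (q := f ^ 2))
            (by rw [natDegree_pow]; omega)),
          coeff_eq_zero_of_natDegree_lt (lt_of_le_of_lt (natDegree_mul_le (p := X) (q := f ^ 4))
            (by rw [natDegree_X, natDegree_pow]; omega))]
        ring
      obtain ⟨hgdeg, hglc⟩ := lead_of_coeff hgb (by rw [hgc]; exact pow_ne_zero _ hlca)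
      refine ⟨b.leadingCoeff / a.leadingCoeff, ?_⟩
      have hl : b.leadingCoeff ^ 2 = a.leadingCoeff ^ 3 := by
        have h1 : (b ^ 2).leadingCoeff = (a * g).leadingCoeff := by rw [h]
        rw [leadingCoeff_pow, leadingCoeff_mul, hglc, hgc] at h1
        rw [h1]; ring
      rw [div_pow, eq_div_iff (pow_ne_zero _ hlca)]
      linear_combination -hl
  -- now split according to whether X divides a
  by_cases hXa : X ∣ a
  · obtain ⟨a₁, ha₁⟩ := hXa
    have ha₁0 : a₁ ≠ 0 := by rintro rfl; rw [mul_zero] at ha₁; exact ha ha₁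
    have hg1 : g = X * (X * a₁ ^ 2 - a₁ * f ^ 2 + f ^ 4) := by
      rw [hg_def, ha₁]; ring
    have hXb : X ∣ b := by
      refine Polynomial.prime_X.dvd_of_dvd_pow (n := 2) ?_
      rw [h, ha₁, hg1]
      exact ⟨X * a₁ * (X * a₁ ^ 2 - a₁ * f ^ 2 + f ^ 4), by ring⟩
    obtain ⟨b₁, hb₁⟩ := hXb
    have hb₁sq : b₁ ^ 2 = a₁ * (X * a₁ ^ 2 - a₁ * f ^ 2 + f ^ 4) := by
      have h1 : X ^ 2 * b₁ ^ 2 = X ^ 2 * (a₁ * (X * a₁ ^ 2 - a₁ * f ^ 2 + f ^ 4)) := by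
        calc X ^ 2 * b₁ ^ 2 = b ^ 2 := by rw [hb₁]; ring
          _ = a * g := h
          _ = X ^ 2 * (a₁ * (X * a₁ ^ 2 - a₁ * f ^ 2 + f ^ 4)) := by rw [ha₁, hg1]; ring
      exact mul_left_cancel₀ (pow_ne_zero _ X_ne_zero) h1
    have hcog : IsCoprime a₁ (X * a₁ ^ 2 - a₁ * f ^ 2 + f ^ 4) := by
      have h1 : IsCoprime a₁ (f ^ 4) :=
        (hco.of_isCoprime_of_dvd_left ⟨X, by rw [ha₁]; ring⟩).pow_right
      have h2 := h1.add_mul_left_right (X * a₁ - f ^ 2)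
      have h3 : f ^ 4 + a₁ * (X * a₁ - f ^ 2) = X * a₁ ^ 2 - a₁ * f ^ 2 + f ^ 4 := by ring
      rwa [h3] at h2
    have hlca₁ : a₁.leadingCoeff = s ^ 2 := by
      rw [← hs, ha₁, leadingCoeff_mul, leadingCoeff_X, one_mul]
    obtain ⟨m, nn, ham, hgn⟩ := sq_of_coprime_mul_sq ha₁0 hcog hb₁sq.symm hlca₁
    have hm0 : m ≠ 0 := by rintro rfl; rw [zero_pow two_ne_zero] at ham; exact ha₁0 ham
    have hcofm : IsCoprime f m :=
      hco.symm.of_isCoprime_of_dvd_right ⟨X * m, by rw [ha₁, ham]; ring⟩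
    have hfinal : nn ^ 2 = f ^ 4 - f ^ 2 * m ^ 2 + X * m ^ 4 := by
      rw [← hgn, ham]; ring
    exact (key m.natDegree nn f m hm0 hcofm le_rfl).1 hfinal
  · have hcoaX : IsCoprime a X := (Polynomial.prime_X.coprime_iff_not_dvd.mpr hXa).symm
    have hcog : IsCoprime a g := by
      have h1 : IsCoprime a (X * f ^ 4) := hcoaX.mul_right hco.pow_right
      have h2 := h1.add_mul_left_right (a - f ^ 2)
      have h3 : X * f ^ 4 + a * (a - f ^ 2) = g := by rw [hg_def]; ring
      rwa [h3] at h2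
    obtain ⟨m, nn, ham, hgn⟩ := sq_of_coprime_mul_sq ha hcog h.symm hs
    have hm0 : m ≠ 0 := by rintro rfl; rw [zero_pow two_ne_zero] at ham; exact ha ham
    have hcomf : IsCoprime m f := hco.of_isCoprime_of_dvd_left ⟨m, by rw [ham]; ring⟩
    have hfinal : nn ^ 2 = m ^ 4 - m ^ 2 * f ^ 2 + X * f ^ 4 := by
      rw [← hgn, hg_def, ham]; ring
    exact (key f.natDegree nn m f hf hcomf le_rfl).1 hfinal

/-- The affine equation has no solution with `x ≠ 0` over `ℚ(T)`. -/
lemma no_nontrivial {x y : RatFunc ℚ} (h : y ^ 2 = x ^ 3 - x ^ 2 + RatFunc.X * x) :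
    x = 0 := by
  by_contra hx0
  set A := x.num with hA
  set D := x.denom with hD
  set B := y.num with hB
  set E := y.denom with hE
  have hD0 : D ≠ 0 := x.denom_ne_zero
  have hE0 : E ≠ 0 := y.denom_ne_zero
  have hA0 : A ≠ 0 := RatFunc.num_ne_zero hx0
  have hφD : algebraMap ℚ[X] (RatFunc ℚ) D ≠ 0 := RatFunc.algebraMap_ne_zero hD0
  have hφE : algebraMap ℚ[X] (RatFunc ℚ) E ≠ 0 := RatFunc.algebraMap_ne_zero hE0
  have hxx : x = algebraMap ℚ[X] (RatFunc ℚ) A / algebraMap ℚ[X] (RatFunc ℚ) D :=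
    (RatFunc.num_div_denom x).symm
  have hyy : y = algebraMap ℚ[X] (RatFunc ℚ) B / algebraMap ℚ[X] (RatFunc ℚ) E :=
    (RatFunc.num_div_denom y).symm
  have hX : RatFunc.X = algebraMap ℚ[X] (RatFunc ℚ) Polynomial.X :=
    (RatFunc.algebraMap_X).symm
  -- the polynomial form of the Weierstrass equation
  have hcross : B ^ 2 * D ^ 3 = E ^ 2 * (A ^ 3 - A ^ 2 * D + X * A * D ^ 2) := by
    have e1 : (algebraMap ℚ[X] (RatFunc ℚ) B) ^ 2 = y ^ 2 * (algebraMap ℚ[X] (RatFunc ℚ) E) ^ 2 := by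
      rw [hyy, div_pow]
      field_simp
    have e2 : algebraMap ℚ[X] (RatFunc ℚ) A = x * algebraMap ℚ[X] (RatFunc ℚ) D := by
      rw [hxx]
      field_simp
    apply RatFunc.algebraMap_injective
    simp only [map_mul, map_pow, map_sub, map_add]
    rw [e2, e1, h, hX]
    ring
  -- the denominators:  E ^ 2 = D ^ 3
  have hcopAD : IsCoprime A D := RatFunc.isCoprime_num_denom x
  have hcopBE : IsCoprime B E := RatFunc.isCoprime_num_denom y
  have hED : E ^ 2 = D ^ 3 := by
    have h1 : E ^ 2 ∣ D ^ 3 := by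
      refine (hcopBE.symm.pow (m := 2) (n := 2)).dvd_of_dvd_mul_right ?_
      exact ⟨A ^ 3 - A ^ 2 * D + X * A * D ^ 2, by linear_combination hcross⟩
    have hcopDM : IsCoprime (D ^ 3) (A ^ 3 - A ^ 2 * D + X * A * D ^ 2) := by
      have h2 : IsCoprime D (A ^ 3) := hcopAD.symm.pow_right
      have h3 := h2.add_mul_left_right (X * A * D - A ^ 2)
      have h4 : A ^ 3 + D * (X * A * D - A ^ 2) = A ^ 3 - A ^ 2 * D + X * A * D ^ 2 := by ring
      rw [h4] at h3
      exact h3.pow_left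
    have h5 : D ^ 3 ∣ E ^ 2 := by
      refine hcopDM.dvd_of_dvd_mul_right ?_
      exact ⟨B ^ 2, by linear_combination -hcross⟩
    exact Polynomial.eq_of_monic_of_associated ((RatFunc.monic_denom y).pow 2)
      ((RatFunc.monic_denom x).pow 3) (associated_of_dvd_dvd h1 h5)
  -- extract the square root f of D
  have hDdvdE : D ∣ E := by
    refine (IsIntegrallyClosed.pow_dvd_pow_iff two_ne_zero).mp ?_
    exact ⟨D, by rw [hED]; ring⟩
  obtain ⟨f, hf⟩ := hDdvdE
  have hfsq : D = f ^ 2 := by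
    have h1 : D ^ 2 * D = D ^ 2 * f ^ 2 := by
      have h2 : D ^ 2 * D = E ^ 2 := by rw [hED]; ring
      rw [h2, hf]; ring
    exact mul_left_cancel₀ (pow_ne_zero _ hD0) h1
  have hf0 : f ≠ 0 := by rintro rfl; rw [zero_pow two_ne_zero] at hfsq; exact hD0 hfsq
  -- the integral equation
  have hint : B ^ 2 = A * (A ^ 2 - A * f ^ 2 + X * f ^ 4) := by
    have h1 : f ^ 6 * B ^ 2 = f ^ 6 * (A * (A ^ 2 - A * f ^ 2 + X * f ^ 4)) := by
      calc f ^ 6 * B ^ 2 = B ^ 2 * D ^ 3 := by rw [hfsq]; ring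
        _ = E ^ 2 * (A ^ 3 - A ^ 2 * D + X * A * D ^ 2) := hcross
        _ = f ^ 6 * (A * (A ^ 2 - A * f ^ 2 + X * f ^ 4)) := by
            rw [hf, hfsq]; ring
    exact mul_left_cancel₀ (pow_ne_zero _ hf0) h1
  have hcoAf : IsCoprime A f := hcopAD.of_isCoprime_of_dvd_right ⟨f, by rw [hfsq]; ring⟩
  exact layer0 hA0 hf0 hcoAf hint

end ZywinaAux

/-- The elliptic curve `E : y² = x(x² − x + T) = x³ − x² + Tx` over the rational
function field `ℚ(T)`. -/
noncomputable def zywinaCurve : WeierstrassCurve (RatFunc ℚ) :=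
  { a₁ := 0, a₂ := -1, a₃ := 0, a₄ := RatFunc.X, a₆ := 0 }

open scoped Classical in
/-- The elliptic curve `y² = x(x² − x + T)` over `ℚ(T)` has nonzero discriminant and
its Mordell–Weil group `E(ℚ(T))` has rank `0`, i.e. every `ℚ(T)`-point has finite order. -/
theorem zywinaCurve_rank_zero :
    zywinaCurve.Δ ≠ 0 ∧
      ∀ P : zywinaCurve.toAffine.Point, IsOfFinAddOrder P := by
  constructor
  · -- the discriminant is `16T² - 64T³ ≠ 0`
    have hΔeq : zywinaCurve.Δ = 16 * RatFunc.X ^ 2 - 64 * RatFunc.X ^ 3 := by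
      simp only [WeierstrassCurve.Δ, WeierstrassCurve.b₂, WeierstrassCurve.b₄,
        WeierstrassCurve.b₆, WeierstrassCurve.b₈, zywinaCurve]
      ring
    rw [hΔeq]
    have hpoly : (16 * Polynomial.X ^ 2 - 64 * Polynomial.X ^ 3 : Polynomial ℚ) ≠ 0 := by
      intro hp
      have h2 := congrArg (Polynomial.eval 1) hp
      norm_num at h2
    have hmap : algebraMap (Polynomial ℚ) (RatFunc ℚ)
        (16 * Polynomial.X ^ 2 - 64 * Polynomial.X ^ 3)
        = 16 * RatFunc.X ^ 2 - 64 * RatFunc.X ^ 3 := by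
      rw [map_sub, map_mul, map_mul, map_pow, map_pow, map_ofNat, map_ofNat,
        RatFunc.algebraMap_X]
    rw [← hmap]
    exact RatFunc.algebraMap_ne_zero hpoly
  · intro P
    cases P with
    | zero =>
      rw [isOfFinAddOrder_iff_nsmul_eq_zero]
      exact ⟨1, one_pos, by rw [WeierstrassCurve.Affine.Point.zero_def]; simp⟩
    | @some x y hP =>
      have h1 := hP.1
      rw [WeierstrassCurve.Affine.equation_iff] at h1
      have heq : y ^ 2 = x ^ 3 - x ^ 2 + RatFunc.X * x := by
        simp only [zywinaCurve, WeierstrassCurve.toAffine] at h1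
        linear_combination h1
      have hx0 : x = 0 := ZywinaAux.no_nontrivial heq
      subst hx0
      have hy0 : y = 0 := by
        have h2 : y ^ 2 = 0 := by rw [heq]; ring
        exact pow_eq_zero_iff two_ne_zero |>.mp h2
      subst hy0
      have hY : zywinaCurve.toAffine.negY 0 0 = 0 := by
        simp [WeierstrassCurve.Affine.negY, zywinaCurve, WeierstrassCurve.toAffine]
      have hneg : -(WeierstrassCurve.Affine.Point.some _ _ hP)
          = WeierstrassCurve.Affine.Point.some _ _ hP := by
        rw [WeierstrassCurve.Affine.Point.neg_some]
        have key : ∀ (y' : RatFunc ℚ) (h' : zywinaCurve.toAffine.Nonsingular 0 y'), y' = 0 →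
            WeierstrassCurve.Affine.Point.some _ _ h' = WeierstrassCurve.Affine.Point.some _ _ hP := by
          rintro y' h' rfl
          rfl
        exact key _ _ hY
      rw [isOfFinAddOrder_iff_nsmul_eq_zero]
      refine ⟨2, two_pos, ?_⟩
      rw [two_nsmul]
      nth_rewrite 2 [← hneg]
      exact add_neg_cancel _
end

section
/- Let m and n be positive integers, let d be a nonzero integer, and let p be a prime such that the p-adic valuation of d equals 1 and p does not divide m(m+2n). Then there is no pair (x, y) ∈ ℚ_p × ℚ_p satisfying y² = d·x⁴ + 2m²·x² − m³(m+2n)/d. -/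
section Aux

variable {p : ℕ} [hp : Fact p.Prime]

private lemma aux_one_lt_p : (1 : ℝ) < p := by exact_mod_cast hp.out.one_lt

/-- norm comparison from valuation comparison -/
private lemma aux_norm_lt_of_val_lt {x y : ℚ_[p]} (hx : x ≠ 0) (hy : y ≠ 0)
    (h : x.valuation < y.valuation) : ‖y‖ < ‖x‖ := by
  rw [Padic.norm_eq_zpow_neg_valuation hx, Padic.norm_eq_zpow_neg_valuation hy]
  exact zpow_lt_zpow_right₀ aux_one_lt_p (by omega)

private lemma aux_norm_le_pow {x : ℚ_[p]} (hx : x ≠ 0) {a : ℤ} (h : a ≤ x.valuation) :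
    ‖x‖ ≤ (p : ℝ) ^ (-a) := by
  rw [Padic.norm_eq_zpow_neg_valuation hx]
  exact zpow_le_zpow_right₀ aux_one_lt_p.le (by omega)

/-- if ‖y‖ < ‖x‖ then x + y is nonzero with the same valuation as x -/
private lemma aux_add_val {x y : ℚ_[p]} (hx : x ≠ 0) (h : ‖y‖ < ‖x‖) :
    x + y ≠ 0 ∧ (x + y).valuation = x.valuation := by
  have hxy : ‖x + y‖ = ‖x‖ := by
    rw [Padic.add_eq_max_of_ne h.ne']
    exact max_eq_left h.le
  have hne : x + y ≠ 0 := by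
    intro h0
    rw [h0, norm_zero] at hxy
    exact hx (norm_eq_zero.mp hxy.symm)
  refine ⟨hne, ?_⟩
  rw [Padic.norm_eq_zpow_neg_valuation hne, Padic.norm_eq_zpow_neg_valuation hx] at hxy
  have := zpow_right_injective₀
    (by exact_mod_cast hp.out.pos : (0:ℝ) < p) aux_one_lt_p.ne' hxy
  omega

private lemma aux_val_sq {x : ℚ_[p]} (hx : x ≠ 0) :
    (x ^ 2).valuation = 2 * x.valuation := by
  rw [sq, Padic.valuation_mul hx hx]; ring

private lemma aux_val_p4 {x : ℚ_[p]} (hx : x ≠ 0) :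
    (x ^ 4).valuation = 4 * x.valuation := by
  have : x ^ 4 = x ^ 2 * x ^ 2 := by ring
  rw [this, Padic.valuation_mul (pow_ne_zero 2 hx) (pow_ne_zero 2 hx), aux_val_sq hx]
  ring

end Aux

/-- Let `m` and `n` be positive integers, let `d` be a nonzero integer, and let `p` be a
prime such that the `p`-adic valuation of `d` is exactly `1` and `p` does not divide
`m(m + 2n)`.  Then the affine model `y² = d·x⁴ + 2m²·x² − m³(m+2n)/d` of the quartic
curve `C′_d` has no `ℚ_p`-rational points. -/
theorem no_padic_points_of_valuation_one (m n : ℕ) (hm : 0 < m) (hn : 0 < n)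
    (d : ℤ) (hd : d ≠ 0) (p : ℕ) [hp : Fact p.Prime]
    (hval : padicValInt p d = 1) (hdvd : ¬ p ∣ m * (m + 2 * n)) :
    ¬ ∃ x y : ℚ_[p],
      y ^ 2 = (d : ℚ_[p]) * x ^ 4 + 2 * (m : ℚ_[p]) ^ 2 * x ^ 2 -
        (m : ℚ_[p]) ^ 3 * ((m : ℚ_[p]) + 2 * (n : ℚ_[p])) / (d : ℚ_[p]) := by
  rintro ⟨x, y, h⟩
  have hdQ : (d : ℚ_[p]) ≠ 0 := Int.cast_ne_zero.mpr hd
  have vd : ((d : ℚ_[p])).valuation = 1 := by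
    rw [Padic.valuation_intCast, hval]; norm_num
  -- the constant C
  set C : ℚ_[p] := (m : ℚ_[p]) ^ 3 * ((m : ℚ_[p]) + 2 * (n : ℚ_[p])) with hCdef
  have hCnat : C = ((m ^ 3 * (m + 2 * n) : ℕ) : ℚ_[p]) := by push_cast [hCdef]; ring
  have hpC : ¬ p ∣ m ^ 3 * (m + 2 * n) := by
    intro hdvd'
    apply hdvd
    rcases (hp.out.dvd_mul.mp hdvd') with h1 | h1
    · exact Dvd.dvd.mul_right (hp.out.dvd_of_dvd_pow h1) _
    · exact Dvd.dvd.mul_left h1 _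
  have hCne : C ≠ 0 := by
    rw [hCnat]
    exact_mod_cast Nat.cast_ne_zero.mpr
      (Nat.mul_ne_zero (pow_ne_zero 3 hm.ne') (by omega))
  have vC : C.valuation = 0 := by
    rw [hCnat, Padic.valuation_natCast, padicValNat.eq_zero_of_not_dvd hpC]
    norm_num
  -- multiply through by d
  have h2 : (d : ℚ_[p]) * y ^ 2 =
      (d : ℚ_[p]) ^ 2 * x ^ 4 + 2 * (m : ℚ_[p]) ^ 2 * (d : ℚ_[p]) * x ^ 2 + -C := by
    field_simp at h
    linear_combination h
  -- valuation of LHS is odd (if y ≠ 0)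
  have lhs_val : ∀ hy : y ≠ 0,
      ((d : ℚ_[p]) * y ^ 2).valuation = 1 + 2 * y.valuation := by
    intro hy
    rw [Padic.valuation_mul hdQ (pow_ne_zero 2 hy), vd, aux_val_sq hy]
  have vnegC : (-C).valuation = 0 := by
    have : (-C) = (-1 : ℚ_[p]) * C := by ring
    rw [this, Padic.valuation_mul (by norm_num) hCne, vC]
    have : ((-1 : ℤ) : ℚ_[p]) = (-1 : ℚ_[p]) := by push_cast; ring
    rw [← this, Padic.valuation_intCast]
    simp [padicValInt]
  have hnegCne : (-C) ≠ 0 := neg_ne_zero.mpr hCne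
  rcases eq_or_ne x 0 with rfl | hx
  · -- x = 0 : d y² = -C
    have h3 : (d : ℚ_[p]) * y ^ 2 = -C := by rw [h2]; ring
    have hy : y ≠ 0 := by
      intro h0
      rw [h0] at h3
      exact hnegCne (by linear_combination -h3)
    have := lhs_val hy
    rw [h3, vnegC] at this
    omega
  · -- x ≠ 0
    set A := x.valuation with hA
    have hm0 : (m : ℚ_[p]) ≠ 0 := Nat.cast_ne_zero.mpr hm.ne'
    have hpm : ¬ p ∣ m := fun hh => hdvd (Dvd.dvd.mul_right hh _)
    have vm : (m : ℚ_[p]).valuation = 0 := by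
      rw [Padic.valuation_natCast, padicValNat.eq_zero_of_not_dvd hpm]; norm_num
    have h20 : (2 : ℚ_[p]) ≠ 0 := two_ne_zero
    have v2 : (0 : ℤ) ≤ (2 : ℚ_[p]).valuation := by
      have : ((2 : ℕ) : ℚ_[p]) = (2 : ℚ_[p]) := by norm_num
      rw [← this, Padic.valuation_natCast]
      positivity
    -- the two leading terms
    set T1 : ℚ_[p] := (d : ℚ_[p]) ^ 2 * x ^ 4 with hT1
    set T2 : ℚ_[p] := 2 * (m : ℚ_[p]) ^ 2 * (d : ℚ_[p]) * x ^ 2 with hT2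
    have hT1ne : T1 ≠ 0 := mul_ne_zero (pow_ne_zero 2 hdQ) (pow_ne_zero 4 hx)
    have hT2ne : T2 ≠ 0 := by
      apply mul_ne_zero (mul_ne_zero (mul_ne_zero h20 (pow_ne_zero 2 hm0)) hdQ)
        (pow_ne_zero 2 hx)
    have vT1 : T1.valuation = 2 + 4 * A := by
      rw [hT1, Padic.valuation_mul (pow_ne_zero 2 hdQ) (pow_ne_zero 4 hx),
        aux_val_sq hdQ, aux_val_p4 hx, vd]
      omega
    have vT2 : 1 + 2 * A ≤ T2.valuation := by
      rw [hT2, Padic.valuation_mul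
        (mul_ne_zero (mul_ne_zero h20 (pow_ne_zero 2 hm0)) hdQ) (pow_ne_zero 2 hx),
        Padic.valuation_mul (mul_ne_zero h20 (pow_ne_zero 2 hm0)) hdQ,
        Padic.valuation_mul h20 (pow_ne_zero 2 hm0),
        aux_val_sq hm0, aux_val_sq hx, vm, vd]
      omega
    rcases le_or_gt 0 A with hA0 | hA0
    · -- A ≥ 0 : RHS has valuation 0
      have hS : ∀ hS0 : T1 + T2 ≠ 0, 1 ≤ (T1 + T2).valuation := by
        intro hS0
        have hmin : (1:ℤ) ≤ min T1.valuation T2.valuation :=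
          le_min (by rw [vT1]; omega) (by omega)
        exact hmin.trans (Padic.le_valuation_add hS0)
      have key : (T1 + T2 + -C) ≠ 0 ∧ (T1 + T2 + -C).valuation = 0 := by
        rcases eq_or_ne (T1 + T2) 0 with hS0 | hS0
        · rw [hS0, zero_add]; exact ⟨hnegCne, vnegC⟩
        · have hlt : ‖T1 + T2‖ < ‖-C‖ := by
            have h1 : ‖T1 + T2‖ ≤ (p : ℝ) ^ (-(1:ℤ)) :=
              aux_norm_le_pow hS0 (hS hS0)
            have h2 : ‖-C‖ = (p : ℝ) ^ (-(0:ℤ)) := by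
              rw [Padic.norm_eq_zpow_neg_valuation hnegCne, vnegC]
            rw [h2]
            exact h1.trans_lt (zpow_lt_zpow_right₀ aux_one_lt_p (by omega))
          have := aux_add_val hnegCne hlt
          rw [add_comm] at this
          rw [vnegC] at this
          exact this
      have hy : y ≠ 0 := by
        intro h0
        rw [h0] at h2
        exact key.1 (by linear_combination -h2)
      have := lhs_val hy
      rw [h2, key.2] at this
      omega
    · -- A < 0 : RHS has valuation 2 + 4A, even
      have key : (T1 + (T2 + -C)) ≠ 0 ∧ (T1 + (T2 + -C)).valuation = 2 + 4 * A := by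
        have hlt : ‖T2 + -C‖ < ‖T1‖ := by
          have hb1 : ‖T2‖ ≤ (p : ℝ) ^ (-(1 + 2 * A)) := aux_norm_le_pow hT2ne vT2
          have hb2 : ‖-C‖ ≤ (p : ℝ) ^ (-(1 + 2 * A)) :=
            aux_norm_le_pow hnegCne (by rw [vnegC]; omega)
          have hb : ‖T2 + -C‖ ≤ (p : ℝ) ^ (-(1 + 2 * A)) :=
            (Padic.nonarchimedean T2 (-C)).trans (max_le hb1 hb2)
          have hT1n : ‖T1‖ = (p : ℝ) ^ (-(2 + 4 * A)) := by
            rw [Padic.norm_eq_zpow_neg_valuation hT1ne, vT1]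
          rw [hT1n]
          exact hb.trans_lt (zpow_lt_zpow_right₀ aux_one_lt_p (by omega))
        have := aux_add_val hT1ne hlt
        rw [vT1] at this
        exact this
      have hy : y ≠ 0 := by
        intro h0
        rw [h0] at h2
        apply key.1
        linear_combination -h2
      have := lhs_val hy
      have heq : (d : ℚ_[p]) * y ^ 2 = T1 + (T2 + -C) := by rw [h2]; ring
      rw [heq, key.2] at this
      omega
end

section
/- Let m and n be positive integers with m ≡ 3 (mod 8) and m+2n ≡ 3 (mod 8), and let d be an odd integer with d ≡ 3 (mod 8) or d ≡ 5 (mod 8). Then there is no pair (x, y) ∈ ℚ₂ × ℚ₂ satisfying y² = d·x⁴ + 2m²·x² − m³(m+2n)/d. -/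
private lemma unit_sq_mod8 (z : ℤ_[2]) (hz : ‖z‖ = 1) :
    PadicInt.toZModPow (p := 2) 3 z ^ 2 = 1 := by
  obtain ⟨u, hu⟩ := (PadicInt.isUnit_iff.mpr hz).map (PadicInt.toZModPow (p := 2) 3)
  have h : ∀ u : (ZMod (2 ^ 3))ˣ, (u : ZMod (2 ^ 3)) ^ 2 = 1 := by decide
  rw [← hu]; exact h u

private lemma toZMod8_eq_zero_iff (A : ℤ_[2]) :
    PadicInt.toZModPow (p := 2) 3 A = 0 ↔ ‖A‖ ≤ (2 : ℝ) ^ (-3 : ℤ) := by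
  rw [show (PadicInt.toZModPow (p := 2) 3 A = 0) ↔
      A ∈ RingHom.ker (PadicInt.toZModPow (p := 2) 3) from Iff.rfl,
    PadicInt.ker_toZModPow, ← PadicInt.norm_le_pow_iff_mem_span_pow]
  norm_num

private lemma norm_int_eq_one_of_odd (a : ℤ) (ha : Odd a) : ‖(a : ℚ_[2])‖ = 1 := by
  rcases lt_or_eq_of_le (Padic.norm_int_le_one (p := 2) a) with hlt | he
  · exfalso
    have := (Padic.norm_intCast_lt_one_iff (p := 2) (k := a)).mp hlt
    obtain ⟨k, hk⟩ := ha
    obtain ⟨j, hj⟩ := this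
    omega
  · exact he

set_option maxHeartbeats 2000000 in
/-- Let `m` and `n` be positive integers with `m ≡ 3 (mod 8)` and `m + 2n ≡ 3 (mod 8)`,
and let `d` be an odd integer with `d ≡ 3 (mod 8)` or `d ≡ 5 (mod 8)` (i.e.
`d ≡ ±3 (mod 8)`).  Then the affine model `y² = d·x⁴ + 2m²·x² − m³(m+2n)/d` of the
quartic curve `C′_d` has no `ℚ₂`-rational points. -/
theorem no_2adic_points_of_mod_eight (m n : ℕ) (hm : 0 < m) (hn : 0 < n)
    (hm_mod : m % 8 = 3) (hm2n_mod : (m + 2 * n) % 8 = 3)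
    (d : ℤ) (hd_odd : Odd d) (hd_mod : d % 8 = 3 ∨ d % 8 = 5) :
    ¬ ∃ x y : ℚ_[2],
      y ^ 2 = (d : ℚ_[2]) * x ^ 4 + 2 * (m : ℚ_[2]) ^ 2 * x ^ 2 -
        (m : ℚ_[2]) ^ 3 * ((m : ℚ_[2]) + 2 * (n : ℚ_[2])) / (d : ℚ_[2]) := by
  rintro ⟨x, y, h⟩
  set C : ℤ := (m : ℤ) ^ 3 * ((m : ℤ) + 2 * n) with hCdef
  have hd0 : d ≠ 0 := by rintro rfl; simp at hd_mod
  have hd0' : (d : ℚ_[2]) ≠ 0 := Int.cast_ne_zero.mpr hd0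
  have hmodd : Odd (m : ℤ) := ⟨4 * (m / 8 : ℕ) + 1, by push_cast; omega⟩
  have hm2nodd : Odd ((m : ℤ) + 2 * n) := by
    refine ⟨4 * ((m + 2 * n) / 8 : ℕ) + 1, ?_⟩
    have := Nat.div_add_mod (m + 2 * n) 8
    push_cast
    omega
  have hCodd : Odd C := (hmodd.pow).mul hm2nodd
  -- main equation
  have H : (d : ℚ_[2]) * y ^ 2 + (C : ℚ_[2]) =
      (d : ℚ_[2]) ^ 2 * x ^ 4 + 2 * (d : ℚ_[2]) * (m : ℚ_[2]) ^ 2 * x ^ 2 := by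
    have hC : (C : ℚ_[2]) = (m : ℚ_[2]) ^ 3 * ((m : ℚ_[2]) + 2 * (n : ℚ_[2])) := by
      rw [hCdef]; push_cast; ring
    field_simp at h
    rw [hC]
    linear_combination h
  -- norms
  have hd1 : ‖(d : ℚ_[2])‖ = 1 := norm_int_eq_one_of_odd d hd_odd
  have hC1 : ‖(C : ℚ_[2])‖ = 1 := norm_int_eq_one_of_odd C hCodd
  have hm1 : ‖(m : ℚ_[2])‖ = 1 := by
    have := norm_int_eq_one_of_odd (m : ℤ) hmodd
    rwa [Int.cast_natCast] at this
  have h21 : ‖(2 : ℚ_[2])‖ = (2 : ℝ)^(-1 : ℤ) := by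
    have := Padic.norm_p (p := 2)
    norm_num at this ⊢
    exact_mod_cast this
  -- ZMod facts
  have h8 : ((8 : ℕ) : ZMod (2^3)) = 0 := by decide
  have hm8 : ((m : ℕ) : ZMod (2^3)) = 3 := by
    have h' := Nat.div_add_mod m 8
    rw [hm_mod] at h'
    rw [← h']; push_cast
    norm_num at h8 ⊢
    rw [h8]; ring
  have hmn8 : ((m + 2 * n : ℕ) : ZMod (2^3)) = 3 := by
    have h' := Nat.div_add_mod (m + 2 * n) 8
    rw [hm2n_mod] at h'
    rw [← h']; push_cast
    norm_num at h8 ⊢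
    rw [h8]; ring
  have hC8 : ((C : ℤ) : ZMod (2^3)) = 1 := by
    rw [hCdef]
    push_cast at hmn8 ⊢
    rw [hmn8, hm8]
    decide
  have hd8 : ((d : ℤ) : ZMod (2^3)) = 3 ∨ ((d : ℤ) : ZMod (2^3)) = 5 := by
    have h' := ZMod.intCast_mod d (2^3)
    rw [show (((2:ℕ)^3 : ℕ) : ℤ) = 8 by norm_num] at h'
    rcases hd_mod with hh | hh
    · left; rw [← h', hh]; norm_num
    · right; rw [← h', hh]; norm_num
  -- cases on the norm of x
  rcases lt_trichotomy ‖x‖ 1 with hx | hx | hx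
  · -- ‖x‖ < 1
    have hxle : ‖x‖ ≤ 1/2 := by
      have := (Padic.norm_le_pow_iff_norm_lt_pow_add_one x (-1)).mpr (by norm_num; exact hx)
      norm_num at this; exact this
    have hR : ‖(d : ℚ_[2]) ^ 2 * x ^ 4 + 2 * (d : ℚ_[2]) * (m : ℚ_[2]) ^ 2 * x ^ 2‖ ≤ 1/8 := by
      refine le_trans (Padic.nonarchimedean _ _) (max_le ?_ ?_)
      · rw [norm_mul, norm_pow, norm_pow, hd1]
        have : ‖x‖^4 ≤ (1/2:ℝ)^4 := pow_le_pow_left₀ (norm_nonneg x) hxle 4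
        nlinarith [norm_nonneg x]
      · rw [norm_mul, norm_mul, norm_mul, norm_pow, hd1, hm1, h21]
        have : ‖x‖^2 ≤ (1/2:ℝ)^2 := pow_le_pow_left₀ (norm_nonneg x) hxle 2
        norm_num at this ⊢
        nlinarith [norm_nonneg x]
    have hy1 : ‖y‖ = 1 := by
      have he : (d : ℚ_[2]) * y ^ 2 =
          ((d : ℚ_[2]) ^ 2 * x ^ 4 + 2 * (d : ℚ_[2]) * (m : ℚ_[2]) ^ 2 * x ^ 2) + (-(C : ℚ_[2])) := by
        linear_combination H
      have hne : ‖(d : ℚ_[2]) ^ 2 * x ^ 4 + 2 * (d : ℚ_[2]) * (m : ℚ_[2]) ^ 2 * x ^ 2‖ ≠ ‖-(C : ℚ_[2])‖ := by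
        rw [norm_neg, hC1]; intro hc; rw [hc] at hR; norm_num at hR
      have h1 : ‖(d : ℚ_[2]) * y ^ 2‖ = 1 := by
        rw [he, Padic.add_eq_max_of_ne hne, norm_neg, hC1]
        rw [max_eq_right]; linarith
      rw [norm_mul, norm_pow, hd1, one_mul] at h1
      have h2 : (‖y‖ - 1) * (‖y‖ + 1) = 0 := by linear_combination h1
      rcases mul_eq_zero.mp h2 with h3 | h3
      · linarith
      · nlinarith [norm_nonneg y]
    -- move to the integers
    set Y : ℤ_[2] := ⟨y, hy1.le⟩ with hYdef
    set A : ℤ_[2] := (d : ℤ_[2]) * Y ^ 2 + (C : ℤ_[2]) with hAdef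
    have hcoe : (A : ℚ_[2]) = (d : ℚ_[2]) * y ^ 2 + (C : ℚ_[2]) := by
      rw [hAdef]; push_cast; rfl
    have hAn : ‖A‖ ≤ (2:ℝ)^(-3:ℤ) := by
      rw [PadicInt.norm_def, hcoe, H, show ((2:ℝ))^(-3:ℤ) = 1/8 by norm_num]
      exact hR
    have h0 := (toZMod8_eq_zero_iff A).mpr hAn
    rw [hAdef] at h0
    rw [map_add, map_mul, map_pow, map_intCast, map_intCast, hC8] at h0
    have hu := unit_sq_mod8 Y (by rw [PadicInt.norm_def]; exact hy1)
    rw [hu, mul_one] at h0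
    rcases hd8 with hd' | hd' <;> rw [hd'] at h0 <;> exact absurd h0 (by decide)
  · -- ‖x‖ = 1
    set X : ℤ_[2] := ⟨x, hx.le⟩ with hXdef
    set B : ℤ_[2] := (d : ℤ_[2])^2 * X^4 - (C : ℤ_[2]) with hBdef
    have hu := unit_sq_mod8 X (by rw [PadicInt.norm_def]; exact hx)
    have hB0 : PadicInt.toZModPow (p:=2) 3 B = 0 := by
      rw [hBdef, map_sub, map_mul, map_pow, map_pow, map_intCast, map_intCast, hC8,
        show (PadicInt.toZModPow (p:=2) 3 X)^4 = ((PadicInt.toZModPow (p:=2) 3 X)^2)^2 by ring, hu]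
      rcases hd8 with hd' | hd' <;> rw [hd'] <;> decide
    have hBn : ‖(B : ℚ_[2])‖ ≤ 1/8 := by
      have h' := (toZMod8_eq_zero_iff B).mp hB0
      rw [PadicInt.norm_def, show ((2:ℝ))^(-3:ℤ) = 1/8 by norm_num] at h'
      exact h'
    have hBcoe : (B : ℚ_[2]) = (d:ℚ_[2])^2 * x^4 - (C:ℚ_[2]) := by rw [hBdef]; push_cast; rfl
    have hterm : ‖2*(d:ℚ_[2])*(m:ℚ_[2])^2*x^2‖ = 1/2 := by
      rw [norm_mul, norm_mul, norm_mul, norm_pow, norm_pow, hd1, hm1, h21, hx]; norm_num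
    have hdy : ‖y‖^2 = 1/2 := by
      have he : (d:ℚ_[2]) * y^2 = (B : ℚ_[2]) + 2*(d:ℚ_[2])*(m:ℚ_[2])^2*x^2 := by
        rw [hBcoe]; linear_combination H
      have h' : ‖(d:ℚ_[2]) * y^2‖ = 1/2 := by
        rw [he, Padic.add_eq_max_of_ne
          (by rw [hterm]; intro hc; rw [hc] at hBn; norm_num at hBn),
          hterm, max_eq_right (by linarith)]
      rwa [norm_mul, norm_pow, hd1, one_mul] at h'
    have hy0 : y ≠ 0 := by intro h0; rw [h0] at hdy; norm_num at hdy
    rw [Padic.norm_eq_zpow_neg_valuation hy0] at hdy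
    have key : (2:ℝ)^((-y.valuation) * 2) = (2:ℝ)^(-1:ℤ) := by
      rw [zpow_mul]
      push_cast at hdy
      rw [show ((2:ℝ)^(-y.valuation))^(2:ℤ) = ((2:ℝ)^(-y.valuation))^(2:ℕ) by norm_cast, hdy]
      norm_num
    have hval := zpow_right_injective₀ (by norm_num : (0:ℝ) < 2) (by norm_num : (2:ℝ) ≠ 1) key
    omega
  · -- 1 < ‖x‖
    have hx0 : x ≠ 0 := by intro h0; rw [h0, norm_zero] at hx; linarith
    have hxinv : ‖x⁻¹‖ ≤ 1/2 := by
      have hlt : ‖x⁻¹‖ < 1 := by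
        rw [norm_inv]
        exact inv_lt_one_of_one_lt₀ hx
      have h2 := (Padic.norm_le_pow_iff_norm_lt_pow_add_one x⁻¹ (-1)).mpr
        (by rw [show (-1:ℤ)+1 = 0 by ring, zpow_zero]; exact hlt)
      rwa [show (((2:ℕ)):ℝ)^(-1:ℤ) = 1/2 by norm_num] at h2
    set w : ℚ_[2] := y / x^2 with hwdef
    have hw : w^2 - (d:ℚ_[2]) = 2*(m:ℚ_[2])^2*(x⁻¹)^2 - (C:ℚ_[2])/(d:ℚ_[2])*(x⁻¹)^4 := by
      rw [hwdef]
      field_simp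
      linear_combination H
    have hsmall : ‖w^2 - (d:ℚ_[2])‖ ≤ 1/8 := by
      rw [hw, sub_eq_add_neg]
      refine le_trans (Padic.nonarchimedean _ _) (max_le ?_ ?_)
      · rw [norm_mul, norm_mul, norm_pow, norm_pow, hm1, h21]
        have : ‖x⁻¹‖^2 ≤ (1/2:ℝ)^2 := pow_le_pow_left₀ (norm_nonneg _) hxinv 2
        norm_num at this ⊢
        nlinarith [norm_nonneg x⁻¹]
      · rw [norm_neg, norm_mul, norm_div, norm_pow, hd1, hC1]
        have : ‖x⁻¹‖^4 ≤ (1/2:ℝ)^4 := pow_le_pow_left₀ (norm_nonneg _) hxinv 4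
        nlinarith [norm_nonneg x⁻¹]
    have hw1 : ‖w‖ = 1 := by
      have he : w^2 = (d:ℚ_[2]) + (w^2 - (d:ℚ_[2])) := by ring
      have h' : ‖w^2‖ = 1 := by
        rw [he, Padic.add_eq_max_of_ne
          (by rw [hd1]; intro hc; rw [← hc] at hsmall; norm_num at hsmall),
          hd1, max_eq_left (by linarith)]
      rw [norm_pow] at h'
      have h2 : (‖w‖ - 1) * (‖w‖ + 1) = 0 := by linear_combination h'
      rcases mul_eq_zero.mp h2 with h3 | h3
      · linarith
      · nlinarith [norm_nonneg w]
    set W : ℤ_[2] := ⟨w, hw1.le⟩ with hWdef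
    set A : ℤ_[2] := W^2 - (d : ℤ_[2]) with hAdef
    have hcoe : (A : ℚ_[2]) = w^2 - (d:ℚ_[2]) := by rw [hAdef]; push_cast; rfl
    have hAn : ‖A‖ ≤ (2:ℝ)^(-3:ℤ) := by
      rw [PadicInt.norm_def, hcoe, show ((2:ℝ))^(-3:ℤ) = 1/8 by norm_num]
      exact hsmall
    have h0 := (toZMod8_eq_zero_iff A).mpr hAn
    rw [hAdef, map_sub, map_pow, map_intCast] at h0
    have hu := unit_sq_mod8 W (by rw [PadicInt.norm_def]; exact hw1)
    rw [hu] at h0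
    rcases hd8 with hd' | hd' <;> rw [hd'] at h0 <;> exact absurd h0 (by decide)
end

section
/- Let m and n be positive integers such that p := m+n is a prime with p ≡ 3 (mod 4) and p ≠ m. Then there is no pair (x, y) ∈ ℚ_p × ℚ_p satisfying y² = −x⁴ + 2m²·x² + m³(m+2n). (Note that −x⁴ + 2m²x² + m³(m+2n) = −(x² − m²)² + 2m³(m+n).) -/
lemma aux_norm_one_add_sq (p : ℕ) [hp : Fact p.Prime] (hp3 : p % 4 = 3)
    (t : ℚ_[p]) (ht : ‖t‖ ≤ 1) : ‖1 + t ^ 2‖ = 1 := by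
  have hle : ‖1 + t ^ 2‖ ≤ 1 := by
    refine le_trans (Padic.nonarchimedean _ _) ?_
    simp only [max_le_iff, norm_one, le_refl, true_and]
    calc ‖t ^ 2‖ = ‖t‖ ^ 2 := by rw [norm_pow]
    _ ≤ 1 := by nlinarith [norm_nonneg t]
  refine le_antisymm hle (le_of_not_gt fun hlt => ?_)
  set T : ℤ_[p] := ⟨t, ht⟩ with hT
  have h1 : ‖(1 + T ^ 2 : ℤ_[p])‖ < 1 := by
    have : ((1 + T ^ 2 : ℤ_[p]) : ℚ_[p]) = 1 + t ^ 2 := by push_cast [hT]; rfl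
    rwa [← PadicInt.padic_norm_e_of_padicInt, this]
  rw [PadicInt.norm_lt_one_iff_dvd] at h1
  obtain ⟨k, hk⟩ := h1
  have h2 : (PadicInt.toZMod T) ^ 2 = -1 := by
    have := congrArg PadicInt.toZMod hk
    simp only [map_add, map_one, map_pow, map_mul, map_natCast, ZMod.natCast_self,
      zero_mul] at this
    linear_combination this
  exact (ZMod.exists_sq_eq_neg_one_iff.mp ⟨PadicInt.toZMod T, by rw [← h2]; ring⟩) hp3

lemma aux_norm_sq_add_sq (p : ℕ) [hp : Fact p.Prime] (hp3 : p % 4 = 3)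
    (a b : ℚ_[p]) (ha : a ≠ 0) (hba : ‖b‖ ≤ ‖a‖) : ‖a ^ 2 + b ^ 2‖ = ‖a‖ ^ 2 := by
  have ht : ‖b / a‖ ≤ 1 := by
    rw [norm_div]
    exact div_le_one_of_le₀ hba (norm_nonneg a)
  have key := aux_norm_one_add_sq p hp3 (b / a) ht
  have : a ^ 2 + b ^ 2 = a ^ 2 * (1 + (b / a) ^ 2) := by field_simp
  rw [this, norm_mul, norm_pow, key, mul_one]

/-- Let `m` and `n` be positive integers such that `p := m + n` is a prime with
`p ≡ 3 (mod 4)` and `p ≠ m`.  Then the affine model `y² = −x⁴ + 2m²·x² + m³(m+2n)`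
of the quartic curve `C′_{-1}` has no `ℚ_p`-rational points. -/
theorem no_padic_points_d_neg_one (m n : ℕ) (hm : 0 < m) (hn : 0 < n)
    [hp : Fact (Nat.Prime (m + n))] (hp_mod : (m + n) % 4 = 3) (hp_ne : m + n ≠ m) :
    ¬ ∃ x y : ℚ_[m + n],
      y ^ 2 = -x ^ 4 + 2 * (m : ℚ_[m + n]) ^ 2 * x ^ 2 +
        (m : ℚ_[m + n]) ^ 3 * ((m : ℚ_[m + n]) + 2 * (n : ℚ_[m + n])) := by
  rintro ⟨x, y, hxy⟩
  set p := m + n with hpdef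
  set z : ℚ_[p] := x ^ 2 - (m : ℚ_[p]) ^ 2 with hz
  have key : y ^ 2 + z ^ 2 = ((2 * m ^ 3 : ℕ) : ℚ_[p]) * ((p : ℕ) : ℚ_[p]) := by
    push_cast [hpdef]
    rw [hxy, hz]; ring
  -- compute norm of RHS
  have hprime := hp.out
  have hp2 : p ≠ 2 := by omega
  have hpm : ¬ (p : ℤ) ∣ ((2 * m ^ 3 : ℕ) : ℤ) := by
    rw [Int.natCast_dvd_natCast]
    intro h
    rcases (Nat.Prime.dvd_mul hprime).mp h with h | h
    · have := (Nat.prime_dvd_prime_iff_eq hprime Nat.prime_two).mp h; omega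
    · have := hprime.dvd_of_dvd_pow h
      have := Nat.le_of_dvd hm this
      omega
  have hnorm1 : ‖((2 * m ^ 3 : ℕ) : ℚ_[p])‖ = 1 := by
    have h1 : ‖((2 * m ^ 3 : ℕ) : ℚ_[p])‖ ≤ 1 := by
      have := Padic.norm_int_le_one (p := p) ((2 * m ^ 3 : ℕ) : ℤ)
      simpa using this
    have h2 : ¬ ‖((2 * m ^ 3 : ℕ) : ℚ_[p])‖ < 1 := by
      intro h
      apply hpm
      have := (Padic.norm_intCast_lt_one_iff (p := p) (k := ((2 * m ^ 3 : ℕ) : ℤ))).mp (by simpa using h)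
      exact this
    linarith [lt_or_eq_of_le h1 |>.resolve_left h2]
  have hnormRHS : ‖((2 * m ^ 3 : ℕ) : ℚ_[p]) * ((p : ℕ) : ℚ_[p])‖ = (p : ℝ)⁻¹ := by
    rw [norm_mul, hnorm1, one_mul]
    exact_mod_cast Padic.norm_p (p := p)
  -- LHS norm is a square of a norm
  have hRHSne : ((2 * m ^ 3 : ℕ) : ℚ_[p]) * ((p : ℕ) : ℚ_[p]) ≠ 0 := by
    intro h
    rw [h, norm_zero] at hnormRHS
    have : (0:ℝ) < (p:ℝ)⁻¹ := by positivity
    · rw [← hnormRHS] at this; exact lt_irrefl _ this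
  obtain ⟨w, hw0, hwnorm⟩ : ∃ w : ℚ_[p], w ≠ 0 ∧ ‖y ^ 2 + z ^ 2‖ = ‖w‖ ^ 2 := by
    rcases le_or_gt ‖z‖ ‖y‖ with h | h
    · have hy0 : y ≠ 0 := by
        intro hy
        apply hRHSne
        rw [← key, hy]
        have hz0 : z = 0 := by
          rw [hy, norm_zero] at h
          exact norm_eq_zero.mp (le_antisymm h (norm_nonneg z))
        rw [hz0]; ring
      exact ⟨y, hy0, aux_norm_sq_add_sq p hp_mod y z hy0 h⟩
    · have hz0 : z ≠ 0 := by
        intro hz'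
        rw [hz', norm_zero] at h
        exact absurd h (not_lt.mpr (norm_nonneg y))
      refine ⟨z, hz0, ?_⟩
      rw [show y ^ 2 + z ^ 2 = z ^ 2 + y ^ 2 by ring]
      exact aux_norm_sq_add_sq p hp_mod z y hz0 h.le
  rw [key, hnormRHS] at hwnorm
  -- now (p:ℝ)⁻¹ = ‖w‖^2 = p^(-2v), contradiction on parity
  rw [Padic.norm_eq_zpow_neg_valuation hw0] at hwnorm
  have hp1 : (1 : ℝ) < (p : ℝ) := by exact_mod_cast hprime.one_lt
  have : ((p : ℝ)) ^ (-1 : ℤ) = (p : ℝ) ^ (-w.valuation * 2) := by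
    rw [zpow_neg_one, hwnorm, ← zpow_natCast, ← zpow_mul]
    norm_num
  have := zpow_right_injective₀ (by positivity) hp1.ne' this
  omega
end

section
/- Let m and n be positive integers such that m, m+n and m+2n are all primes congruent to 3 modulo 8. Let d be a squarefree integer with d ∉ {1, m(m+2n), −m(m+2n)}. Then there exists a prime p such that d is not a square in ℚ_p and there is no pair (x, y) ∈ ℚ_p × ℚ_p satisfying y² = d·x⁴ + 2m²·x² − m³(m+2n)/d. -/
section PadicHelpers

variable {p : ℕ} [hp : Fact p.Prime]

private lemma val_pow' {x : ℚ_[p]} (hx : x ≠ 0) (n : ℕ) :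
    (x ^ n).valuation = n * x.valuation := by
  induction n with
  | zero => simp [Padic.valuation_one]
  | succ k ih =>
      rw [pow_succ, Padic.valuation_mul (pow_ne_zero _ hx) hx, ih]
      push_cast; ring

private lemma val_add_eq_left' {a b : ℚ_[p]} (ha : a ≠ 0)
    (h : b = 0 ∨ a.valuation < b.valuation) :
    a + b ≠ 0 ∧ (a + b).valuation = a.valuation := by
  by_cases hb : b = 0
  · simp [hb, ha]
  replace h := h.resolve_left hb
  have hpR : (1 : ℝ) < (p : ℝ) := by exact_mod_cast hp.out.one_lt
  have hna : ‖a‖ = (p : ℝ) ^ (-a.valuation) := Padic.norm_eq_zpow_neg_valuation ha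
  have hnb : ‖b‖ = (p : ℝ) ^ (-b.valuation) := Padic.norm_eq_zpow_neg_valuation hb
  have hlt' : ‖b‖ < ‖a‖ := by
    rw [hna, hnb]
    exact zpow_lt_zpow_right₀ hpR (by omega)
  have hne : ‖a‖ ≠ ‖b‖ := ne_of_gt hlt'
  have hmax : ‖a + b‖ = ‖a‖ := by
    rw [Padic.add_eq_max_of_ne hne]
    exact max_eq_left hlt'.le
  have hab : a + b ≠ 0 := by
    intro h0
    rw [h0, norm_zero] at hmax
    have : (0 : ℝ) < ‖a‖ := norm_pos_iff.2 ha
    linarith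
  refine ⟨hab, ?_⟩
  have h2 := Padic.norm_eq_zpow_neg_valuation hab
  rw [hmax, hna] at h2
  have := zpow_right_injective₀ (by positivity) (ne_of_gt hpR) h2
  omega

private lemma val_add3' {a b c : ℚ_[p]} (ha : a ≠ 0)
    (hb : b = 0 ∨ a.valuation < b.valuation)
    (hc : c = 0 ∨ a.valuation < c.valuation) :
    a + b + c ≠ 0 ∧ (a + b + c).valuation = a.valuation := by
  rw [add_assoc]
  apply val_add_eq_left' ha
  by_cases hbc : b + c = 0
  · exact Or.inl hbc
  right
  rcases hb with hb0 | hb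
  · rw [hb0, zero_add] at hbc ⊢
    exact (hc.resolve_left hbc)
  rcases hc with hc0 | hc
  · rwa [hc0, add_zero]
  calc a.valuation < min b.valuation c.valuation := lt_min hb hc
    _ ≤ (b + c).valuation := Padic.le_valuation_add hbc

private lemma no_sqrt_of_odd_val' {z : ℚ_[p]} (hz : z ≠ 0) (hodd : z.valuation % 2 = 1) :
    ¬ ∃ y : ℚ_[p], y ^ 2 = z := by
  rintro ⟨y, rfl⟩
  have hy : y ≠ 0 := by rintro rfl; simp at hz
  rw [sq, Padic.valuation_mul hy hy] at hodd
  omega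

private lemma val_intCast_eq_zero' {c : ℤ} (hc : ¬ (p : ℤ) ∣ c) :
    ((c : ℚ_[p])).valuation = 0 := by
  rw [Padic.valuation_intCast, padicValInt.eq_zero_of_not_dvd hc]
  rfl

private lemma val_intCast_eq_one' {d : ℤ} (hsf : Squarefree d) (hdvd : (p : ℤ) ∣ d) :
    ((d : ℚ_[p])).valuation = 1 := by
  have hd0 : d ≠ 0 := hsf.ne_zero
  have h1 : 1 ≤ padicValInt p d := by
    have := (padicValInt_dvd_iff (p := p) 1 d).1 (by simpa using hdvd)
    omega
  have h2 : ¬ ((p : ℤ) ^ 2 ∣ d) := by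
    intro hdd
    have : IsUnit ((p : ℤ)) := hsf _ (by rwa [← sq])
    exact hp.out.one_lt.ne' (by
      have := Int.isUnit_iff.1 this
      rcases this with h | h <;> omega)
  have h3 : ¬ (2 ≤ padicValInt p d) := fun h => h2 ((padicValInt_dvd_iff 2 d).2 (Or.inr h))
  rw [Padic.valuation_intCast]
  have : padicValInt p d = 1 := by omega
  rw [this]; rfl

private lemma val_inv' {x : ℚ_[p]} (hx : x ≠ 0) : (x⁻¹).valuation = -x.valuation := by
  have h : x * x⁻¹ = 1 := mul_inv_cancel₀ hx
  have := Padic.valuation_mul (x := x) (y := x⁻¹) hx (inv_ne_zero hx)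
  rw [h, Padic.valuation_one] at this
  omega

private lemma val_div' {a b : ℚ_[p]} (ha : a ≠ 0) (hb : b ≠ 0) :
    (a / b).valuation = a.valuation - b.valuation := by
  rw [div_eq_mul_inv, Padic.valuation_mul ha (inv_ne_zero hb), val_inv' hb]
  ring

private lemma val_neg' (x : ℚ_[p]) : (-x).valuation = x.valuation := by
  by_cases hx : x = 0
  · simp [hx]
  have h1 : (-1 : ℚ_[p]) * x = -x := by ring
  rw [← h1, Padic.valuation_mul (by norm_num) hx]
  have h2 : ((-1 : ℤ) : ℚ_[p]) = -1 := by push_cast; ring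
  rw [← h2, Padic.valuation_intCast]
  simp [padicValInt]

private lemma exists_padicInt_sq' {y : ℚ_[p]} (T : ℤ_[p]) (h : y ^ 2 = (T : ℚ_[p])) :
    ∃ Y : ℤ_[p], Y ^ 2 = T := by
  have hy : ‖y‖ ≤ 1 := by
    have h1 : ‖y‖ ^ 2 ≤ 1 := by
      rw [← norm_pow, h, PadicInt.padic_norm_e_of_padicInt]
      exact T.norm_le_one
    nlinarith [norm_nonneg y]
  refine ⟨⟨y, hy⟩, ?_⟩
  apply Subtype.coe_injective
  push_cast
  exact h

end PadicHelpers

section CaseVal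

/-- The valuation argument: if `p` exactly divides `d` and `p` is coprime to `M`, `Q`
and has small valuation of `2`, then `d` is not a square in `ℚ_p` and the quartic has
no `ℚ_p`-point. -/
private lemma case_val {P : ℕ} [hP : Fact P.Prime] (d M Q : ℤ)
    (hd0 : d ≠ 0) (hM0 : M ≠ 0) (hQ0 : Q ≠ 0)
    (hvd : ((d : ℚ_[P])).valuation = 1)
    (hvM : ((M : ℚ_[P])).valuation = 0)
    (hvQ : ((Q : ℚ_[P])).valuation = 0)
    (hv2 : ((2 : ℚ_[P])).valuation ≤ 1) :
    (¬ ∃ z : ℚ_[P], z ^ 2 = (d : ℚ_[P])) ∧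
      ¬ ∃ x y : ℚ_[P],
        y ^ 2 = (d : ℚ_[P]) * x ^ 4 + 2 * (M : ℚ_[P]) ^ 2 * x ^ 2 -
          (M : ℚ_[P]) ^ 3 * (Q : ℚ_[P]) / (d : ℚ_[P]) := by
  have hdq : (d : ℚ_[P]) ≠ 0 := Int.cast_ne_zero.2 hd0
  have hMq : (M : ℚ_[P]) ≠ 0 := Int.cast_ne_zero.2 hM0
  have hQq : (Q : ℚ_[P]) ≠ 0 := Int.cast_ne_zero.2 hQ0
  have h2q : (2 : ℚ_[P]) ≠ 0 := two_ne_zero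
  have hv2' : 0 ≤ ((2 : ℚ_[P])).valuation := by
    rw [← Padic.norm_le_one_iff_val_nonneg]
    have h2c : ((2 : ℤ) : ℚ_[P]) = (2 : ℚ_[P]) := by push_cast; ring
    rw [← h2c]
    exact Padic.norm_int_le_one _
  constructor
  · exact no_sqrt_of_odd_val' hdq (by rw [hvd]; decide)
  rintro ⟨x, y, hxy⟩
  set C : ℚ_[P] := -((M : ℚ_[P]) ^ 3 * (Q : ℚ_[P]) / (d : ℚ_[P])) with hC
  have hCne : C ≠ 0 := by
    simp only [hC, neg_ne_zero]
    exact div_ne_zero (mul_ne_zero (pow_ne_zero _ hMq) hQq) hdq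
  have hvC : C.valuation = -1 := by
    rw [hC, val_neg', val_div' (mul_ne_zero (pow_ne_zero _ hMq) hQq) hdq,
      Padic.valuation_mul (pow_ne_zero _ hMq) hQq, val_pow' hMq, hvM, hvQ, hvd]
    ring
  have hxy' : y ^ 2 = (d : ℚ_[P]) * x ^ 4 + 2 * (M : ℚ_[P]) ^ 2 * x ^ 2 + C := by
    rw [hxy, hC]; ring
  by_cases hx0 : x = 0
  · have hyC : y ^ 2 = C := by rw [hxy', hx0]; ring
    exact no_sqrt_of_odd_val' hCne (by rw [hvC]; decide) ⟨y, hyC⟩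
  have hA : (d : ℚ_[P]) * x ^ 4 ≠ 0 := mul_ne_zero hdq (pow_ne_zero _ hx0)
  have hB : 2 * (M : ℚ_[P]) ^ 2 * x ^ 2 ≠ 0 :=
    mul_ne_zero (mul_ne_zero h2q (pow_ne_zero _ hMq)) (pow_ne_zero _ hx0)
  have hvA : ((d : ℚ_[P]) * x ^ 4).valuation = 1 + 4 * x.valuation := by
    rw [Padic.valuation_mul hdq (pow_ne_zero _ hx0), hvd, val_pow' hx0]
    push_cast; ring
  have hvB : (2 * (M : ℚ_[P]) ^ 2 * x ^ 2).valuation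
      = (2 : ℚ_[P]).valuation + 2 * x.valuation := by
    rw [Padic.valuation_mul (mul_ne_zero h2q (pow_ne_zero _ hMq)) (pow_ne_zero _ hx0),
      Padic.valuation_mul h2q (pow_ne_zero _ hMq), val_pow' hMq, hvM, val_pow' hx0]
    push_cast; ring
  rcases le_or_gt 0 x.valuation with hk | hk
  · have hrw : (d : ℚ_[P]) * x ^ 4 + 2 * (M : ℚ_[P]) ^ 2 * x ^ 2 + C
        = C + (d : ℚ_[P]) * x ^ 4 + 2 * (M : ℚ_[P]) ^ 2 * x ^ 2 := by ring
    rw [hrw] at hxy'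
    obtain ⟨hne, hval⟩ := val_add3' (b := (d : ℚ_[P]) * x ^ 4)
      (c := 2 * (M : ℚ_[P]) ^ 2 * x ^ 2) hCne (Or.inr (by rw [hvC, hvA]; omega))
      (Or.inr (by rw [hvC, hvB]; omega))
    exact no_sqrt_of_odd_val' hne (by rw [hval, hvC]; decide) ⟨y, hxy'⟩
  · obtain ⟨hne, hval⟩ := val_add3' (b := 2 * (M : ℚ_[P]) ^ 2 * x ^ 2) (c := C) hA
      (Or.inr (by rw [hvA, hvB]; omega)) (Or.inr (by rw [hvA, hvC]; omega))
    exact no_sqrt_of_odd_val' hne (by rw [hval, hvA]; omega) ⟨y, hxy'⟩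

end CaseVal

section CaseTwo

/-- The 2-adic residue argument for odd `d` congruent to `3` or `5` mod `8`. -/
private lemma case_two (d c M : ℤ)
    (h8 : (((d : ZMod 8) = 3) ∧ ((c : ZMod 8) = 5)) ∨
      (((d : ZMod 8) = 5) ∧ ((c : ZMod 8) = 3)))
    (hM8 : ((M : ZMod 8) = 3)) :
    (¬ ∃ z : ℚ_[2], z ^ 2 = (d : ℚ_[2])) ∧
      ¬ ∃ x y : ℚ_[2],
        y ^ 2 = (d : ℚ_[2]) * x ^ 4 + 2 * (M : ℚ_[2]) ^ 2 * x ^ 2 + (c : ℚ_[2]) := by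
  have h8' : (8 : ℕ) ∣ 2 ^ 3 := by norm_num
  set φ : ℤ_[2] →+* ZMod 8 :=
    (ZMod.castHom h8' (ZMod 8)).comp (PadicInt.toZModPow 3) with hφdef
  have hsq : ∀ w : ZMod 8, w ^ 2 ≠ (d : ZMod 8) := by
    rcases h8 with ⟨h, -⟩ | ⟨h, -⟩ <;> rw [h] <;> decide
  constructor
  · rintro ⟨z, hz⟩
    obtain ⟨Z, hZ⟩ := exists_padicInt_sq' ((d : ℤ_[2])) (by push_cast; exact hz)
    have hφ : (φ Z) ^ 2 = (d : ZMod 8) := by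
      have := congrArg φ hZ
      simpa [map_pow, map_intCast] using this
    exact hsq _ hφ
  rintro ⟨x, y, hxy⟩
  by_cases hx : ‖x‖ ≤ 1
  · set X : ℤ_[2] := ⟨x, hx⟩ with hX
    obtain ⟨Y, hY⟩ := exists_padicInt_sq'
      ((d : ℤ_[2]) * X ^ 4 + 2 * (M : ℤ_[2]) ^ 2 * X ^ 2 + (c : ℤ_[2]))
      (by push_cast; exact hxy)
    have hφ : (φ Y) ^ 2 = (d : ZMod 8) * (φ X) ^ 4 + 2 * (3 : ZMod 8) ^ 2 * (φ X) ^ 2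
        + (c : ZMod 8) := by
      have := congrArg φ hY
      simpa [map_add, map_mul, map_pow, map_intCast, map_ofNat, hM8] using this
    have hdec : ∀ a b : ZMod 8, ¬ (b ^ 2 = (d : ZMod 8) * a ^ 4 + 2 * (3 : ZMod 8) ^ 2 * a ^ 2
        + (c : ZMod 8)) := by
      rcases h8 with ⟨h1, h2⟩ | ⟨h1, h2⟩ <;> rw [h1, h2] <;> decide
    exact hdec _ _ hφ
  · push_neg at hx
    have hx0 : x ≠ 0 := by
      intro h0; rw [h0, norm_zero] at hx; linarith
    have h2n : ‖(2 : ℚ_[2])‖ = 2⁻¹ := by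
      have := @Padic.norm_p 2 _
      norm_num at this
      rw [this]; norm_num
    have hz1 : ‖x⁻¹‖ < 1 := by
      rw [norm_inv]
      exact inv_lt_one_of_one_lt₀ hx
    have hz2 : ‖x⁻¹‖ ≤ ((2 : ℕ) : ℝ) ^ (-1 : ℤ) := by
      rw [Padic.norm_le_pow_iff_norm_lt_pow_add_one,
        show (-1 + 1 : ℤ) = 0 by norm_num, zpow_zero]
      exact hz1
    have hz' : ‖x⁻¹ / 2‖ ≤ 1 := by
      rw [norm_div, h2n]
      rw [show ((2 : ℕ) : ℝ) ^ (-1 : ℤ) = 2⁻¹ by norm_num] at hz2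
      rw [div_le_one (by norm_num)]
      linarith
    set Z : ℤ_[2] := ⟨x⁻¹ / 2, hz'⟩ with hZ
    obtain ⟨W, hW⟩ := exists_padicInt_sq'
      ((d : ℤ_[2]) + ((8 * M ^ 2 : ℤ) : ℤ_[2]) * Z ^ 2 + ((16 * c : ℤ) : ℤ_[2]) * Z ^ 4)
      (show (y * x⁻¹ ^ 2) ^ 2 = _ by
        push_cast
        rw [show (y * x⁻¹ ^ 2) ^ 2 = y ^ 2 * (x⁻¹ ^ 2) ^ 2 by ring, hxy]
        rw [show ((Z : ℚ_[2])) = x⁻¹ / 2 from rfl]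
        field_simp
        push_cast [show ((8 : ℤ_[2]) : ℚ_[2]) = 8 from rfl,
          show ((16 : ℤ_[2]) : ℚ_[2]) = 16 from rfl]
        ring)
    have hφ : (φ W) ^ 2 = (d : ZMod 8) := by
      have := congrArg φ hW
      simpa [map_add, map_mul, map_pow, map_intCast, map_ofNat, Int.cast_mul,
        show ((8 : ℤ) : ZMod 8) = 0 by decide,
        show ((16 : ℤ) : ZMod 8) = 0 by decide,
        show ((8 : ZMod 8)) = 0 by decide,
        show ((16 : ZMod 8)) = 0 by decide] using this
    exact hsq _ hφ

end CaseTwo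

section CaseNegOne

/-- The case `d = -1`, handled at the prime `M ≡ 3 mod 4`. -/
private lemma case_neg_one (M Q : ℕ) [hM : Fact M.Prime] (hM4 : M % 4 = 3)
    (hMQ : ¬ M ∣ Q) (hQ0 : Q ≠ 0) :
    (¬ ∃ z : ℚ_[M], z ^ 2 = (-1 : ℚ_[M])) ∧
      ¬ ∃ x y : ℚ_[M],
        y ^ 2 = -(x ^ 4) + 2 * (M : ℚ_[M]) ^ 2 * x ^ 2 +
          (M : ℚ_[M]) ^ 3 * (Q : ℚ_[M]) := by
  have hnsq : ¬ IsSquare (-1 : ZMod M) := by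
    rw [ZMod.exists_sq_eq_neg_one_iff]
    simpa using hM4
  have hMbig : 3 ≤ M := by omega
  have hM0 : (M : ℚ_[M]) ≠ 0 := by
    exact_mod_cast (Nat.cast_ne_zero (R := ℚ_[M])).2 hM.out.ne_zero
  have hQq : ((Q : ℚ_[M])) ≠ 0 := Nat.cast_ne_zero.2 hQ0
  have hvM : ((M : ℚ_[M])).valuation = 1 := Padic.valuation_p
  have hvQ : ((Q : ℚ_[M])).valuation = 0 := by
    have h1 : ¬ ((M : ℤ) ∣ (Q : ℤ)) := by exact_mod_cast hMQ
    have h := val_intCast_eq_zero' (p := M) h1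
    simpa using h
  have hv2 : ((2 : ℚ_[M])).valuation = 0 := by
    have h2 : ¬ ((M : ℤ) ∣ (2 : ℤ)) := by
      intro hdvd
      have := Int.le_of_dvd (by norm_num) hdvd
      omega
    have h := val_intCast_eq_zero' (p := M) h2
    simpa using h
  constructor
  · rintro ⟨z, hz⟩
    obtain ⟨Z, hZ⟩ := exists_padicInt_sq' ((-1 : ℤ_[M])) (by push_cast; exact hz)
    have : IsSquare (-1 : ZMod M) := by
      refine ⟨PadicInt.toZMod Z, ?_⟩
      have := congrArg PadicInt.toZMod hZ
      rw [map_pow, map_neg, map_one] at this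
      rw [← this]; ring
    exact hnsq this
  rintro ⟨x, y, hxy⟩
  set K : ℚ_[M] := (M : ℚ_[M]) ^ 3 * (Q : ℚ_[M]) with hK
  have hKne : K ≠ 0 := mul_ne_zero (pow_ne_zero _ hM0) hQq
  have hvK : K.valuation = 3 := by
    rw [hK, Padic.valuation_mul (pow_ne_zero _ hM0) hQq, val_pow' hM0, hvM, hvQ]
    ring
  by_cases hx0 : x = 0
  · have hyK : y ^ 2 = K := by rw [hxy, hx0]; ring
    exact no_sqrt_of_odd_val' hKne (by rw [hvK]; decide) ⟨y, hyK⟩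
  rcases le_or_gt 1 x.valuation with hk | hk
  · have hxy' : y ^ 2 = K + (-(x ^ 4)) + 2 * (M : ℚ_[M]) ^ 2 * x ^ 2 := by
      rw [hxy]; ring
    have hA : (-(x ^ 4) : ℚ_[M]) ≠ 0 := neg_ne_zero.2 (pow_ne_zero _ hx0)
    have hvA : (-(x ^ 4) : ℚ_[M]).valuation = 4 * x.valuation := by
      rw [val_neg', val_pow' hx0]
      push_cast; ring
    have hB : 2 * (M : ℚ_[M]) ^ 2 * x ^ 2 ≠ 0 :=
      mul_ne_zero (mul_ne_zero two_ne_zero (pow_ne_zero _ hM0)) (pow_ne_zero _ hx0)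
    have hvB : (2 * (M : ℚ_[M]) ^ 2 * x ^ 2).valuation = 2 + 2 * x.valuation := by
      rw [Padic.valuation_mul (mul_ne_zero two_ne_zero (pow_ne_zero _ hM0))
          (pow_ne_zero _ hx0),
        Padic.valuation_mul two_ne_zero (pow_ne_zero _ hM0),
        hv2, val_pow' hM0, hvM, val_pow' hx0]
      push_cast; ring
    obtain ⟨hne, hval⟩ := val_add3' (b := -(x ^ 4)) (c := 2 * (M : ℚ_[M]) ^ 2 * x ^ 2)
      hKne (Or.inr (by rw [hvK, hvA]; omega)) (Or.inr (by rw [hvK, hvB]; omega))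
    exact no_sqrt_of_odd_val' hne (by rw [hval, hvK]; decide) ⟨y, hxy'⟩
  · have hzval : (0 : ℤ) ≤ (x⁻¹).valuation := by rw [val_inv' hx0]; omega
    have hznorm : ‖x⁻¹‖ ≤ 1 := (Padic.norm_le_one_iff_val_nonneg _).2 hzval
    set Z : ℤ_[M] := ⟨x⁻¹, hznorm⟩ with hZ
    obtain ⟨W, hW⟩ := exists_padicInt_sq'
      ((-1 : ℤ_[M]) + (M : ℤ_[M]) ^ 2 * (2 * Z ^ 2 + (M : ℤ_[M]) * (Q : ℤ_[M]) * Z ^ 4))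
      (show (y * x⁻¹ ^ 2) ^ 2 = _ by
        push_cast [show ((2 : ℤ_[M]) : ℚ_[M]) = 2 from rfl]
        rw [show (y * x⁻¹ ^ 2) ^ 2 = y ^ 2 * (x⁻¹ ^ 2) ^ 2 by ring, hxy]
        rw [show ((Z : ℚ_[M])) = x⁻¹ from rfl, hK]
        field_simp
        ring)
    have : IsSquare (-1 : ZMod M) := by
      refine ⟨PadicInt.toZMod W, ?_⟩
      have hφ := congrArg PadicInt.toZMod hW
      rw [map_pow] at hφ
      simp only [map_add, map_mul, map_pow, map_neg, map_one, map_natCast,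
        ZMod.natCast_self] at hφ
      rw [show ((0 : ZMod M) ^ 2 * _ = 0) from by ring] at hφ
      · rw [← sq]; rw [hφ]; ring
    exact hnsq this

end CaseNegOne

/-- Let `m` and `n` be positive integers such that `m`, `m + n` and `m + 2n` are all
primes congruent to `3` modulo `8`.  Let `d` be a squarefree integer with
`d ∉ {1, m(m+2n), −m(m+2n)}`.  Then there exists a prime `p` such that `d` is not a
square in `ℚ_p` and the affine model `y² = d·x⁴ + 2m²·x² − m³(m+2n)/d` of the quartic
curve `C′_d` has no `ℚ_p`-rational points. -/
theorem exists_padic_obstruction (m n : ℕ) (hm : 0 < m) (hn : 0 < n)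
    (hm_prime : Nat.Prime m) (hm_mod : m % 8 = 3)
    (hmn_prime : Nat.Prime (m + n)) (hmn_mod : (m + n) % 8 = 3)
    (hm2n_prime : Nat.Prime (m + 2 * n)) (hm2n_mod : (m + 2 * n) % 8 = 3)
    (d : ℤ) (hd_sf : Squarefree d)
    (hd1 : d ≠ 1) (hd2 : d ≠ (m : ℤ) * ((m : ℤ) + 2 * (n : ℤ)))
    (hd3 : d ≠ -((m : ℤ) * ((m : ℤ) + 2 * (n : ℤ)))) :
    ∃ p : ℕ, ∃ hp : Nat.Prime p,
      haveI : Fact p.Prime := ⟨hp⟩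
      (¬ ∃ z : ℚ_[p], z ^ 2 = (d : ℚ_[p])) ∧
        ¬ ∃ x y : ℚ_[p],
          y ^ 2 = (d : ℚ_[p]) * x ^ 4 + 2 * (m : ℚ_[p]) ^ 2 * x ^ 2 -
            (m : ℚ_[p]) ^ 3 * ((m : ℚ_[p]) + 2 * (n : ℚ_[p])) / (d : ℚ_[p]) := by
  
  have hd0 : d ≠ 0 := hd_sf.ne_zero
  have hm0 : (m : ℤ) ≠ 0 := by exact_mod_cast hm.ne'
  have hq0 : ((m : ℤ) + 2 * (n : ℤ)) ≠ 0 := by positivity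
  have hmodd : ¬ (2 ∣ m) := by omega
  have hqodd : ¬ (2 ∣ (m + 2 * n)) := by omega
  have hmq_ne : m ≠ m + 2 * n := by omega
  have hm8 : ((m : ℕ) : ZMod 8) = 3 := by
    rw [← ZMod.natCast_mod m 8, hm_mod]; decide
  have hq8 : ((m + 2 * n : ℕ) : ZMod 8) = 3 := by
    rw [← ZMod.natCast_mod (m + 2 * n) 8, hm2n_mod]; decide
  have hm8' : (((m : ℤ)) : ZMod 8) = 3 := by rw [Int.cast_natCast, hm8]
  have hv2two : ((2 : ℚ_[2])).valuation = 1 := by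
    rw [show (2 : ℚ_[2]) = ((2 : ℕ) : ℚ_[2]) by norm_cast]
    exact Padic.valuation_p
  by_cases h2d : (2 : ℤ) ∣ d
  · -- `d` even : valuation argument at `p = 2`
    refine ⟨2, Nat.prime_two, ?_, ?_⟩
    · exact (case_val d (m : ℤ) ((m : ℤ) + 2 * (n : ℤ)) hd0 hm0 hq0
        (val_intCast_eq_one' hd_sf h2d)
        (val_intCast_eq_zero' (by exact_mod_cast hmodd))
        (val_intCast_eq_zero' (by exact_mod_cast hqodd))
        hv2two.le).1
    · rintro ⟨x, y, hxy⟩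
      refine (case_val d (m : ℤ) ((m : ℤ) + 2 * (n : ℤ)) hd0 hm0 hq0
        (val_intCast_eq_one' hd_sf h2d)
        (val_intCast_eq_zero' (by exact_mod_cast hmodd))
        (val_intCast_eq_zero' (by exact_mod_cast hqodd))
        hv2two.le).2 ⟨x, y, ?_⟩
      rw [hxy]; push_cast; ring
  by_cases hex : ∃ r : ℕ, r.Prime ∧ r ∣ d.natAbs ∧ r ≠ m ∧ r ≠ m + 2 * n
  · -- `d` has a prime factor away from `2`, `m`, `m + 2n`
    obtain ⟨r, hr, hrd, hrm, hrq⟩ := hex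
    haveI : Fact r.Prime := ⟨hr⟩
    have hrdz : (r : ℤ) ∣ d := Int.dvd_natAbs.1 (by exact_mod_cast hrd)
    have hr2 : r ≠ 2 := by
      rintro rfl
      exact h2d hrdz
    have hrm' : ¬ ((r : ℤ) ∣ (m : ℤ)) := by
      rw [Int.natCast_dvd_natCast]
      intro h
      exact hrm ((Nat.prime_dvd_prime_iff_eq hr hm_prime).1 h)
    have hrq' : ¬ ((r : ℤ) ∣ ((m : ℤ) + 2 * (n : ℤ))) := by
      rw [show ((m : ℤ) + 2 * (n : ℤ)) = ((m + 2 * n : ℕ) : ℤ) by push_cast; ring,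
        Int.natCast_dvd_natCast]
      intro h
      exact hrq ((Nat.prime_dvd_prime_iff_eq hr hm2n_prime).1 h)
    have hr2' : ¬ ((r : ℤ) ∣ (2 : ℤ)) := by
      rw [show ((2 : ℤ)) = ((2 : ℕ) : ℤ) by norm_num, Int.natCast_dvd_natCast]
      intro h
      rcases (Nat.dvd_prime Nat.prime_two).1 h with h1 | h1
      · exact hr.one_lt.ne' h1
      · exact hr2 h1
    have hv2r : ((2 : ℚ_[r])).valuation ≤ 1 := by
      rw [show (2 : ℚ_[r]) = ((2 : ℤ) : ℚ_[r]) by norm_cast, val_intCast_eq_zero' hr2']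
      norm_num
    refine ⟨r, hr, ?_, ?_⟩
    · exact (case_val d (m : ℤ) ((m : ℤ) + 2 * (n : ℤ)) hd0 hm0 hq0
        (val_intCast_eq_one' hd_sf hrdz) (val_intCast_eq_zero' hrm')
        (val_intCast_eq_zero' hrq') hv2r).1
    · rintro ⟨x, y, hxy⟩
      refine (case_val d (m : ℤ) ((m : ℤ) + 2 * (n : ℤ)) hd0 hm0 hq0
        (val_intCast_eq_one' hd_sf hrdz) (val_intCast_eq_zero' hrm')
        (val_intCast_eq_zero' hrq') hv2r).2 ⟨x, y, ?_⟩
      rw [hxy]; push_cast; ring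
  -- all prime factors of `d` are among `m`, `m + 2n`
  push_neg at hex
  have hD0 : d.natAbs ≠ 0 := Int.natAbs_ne_zero.2 hd0
  have hDsf : Squarefree d.natAbs := Int.squarefree_natAbs.2 hd_sf
  have hmq0 : m * (m + 2 * n) ≠ 0 := by positivity
  have hDmq : d.natAbs ∣ m * (m + 2 * n) := by
    rw [← Nat.factorization_le_iff_dvd hD0 hmq0, Finsupp.le_def]
    intro r
    by_cases hrp : r.Prime
    · by_cases hrD : r ∣ d.natAbs
      · have hr2 : r = m ∨ r = m + 2 * n := by
          by_cases hrm : r = m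
          · exact Or.inl hrm
          · exact Or.inr (hex r hrp hrD hrm)
        have h1 : d.natAbs.factorization r ≤ 1 := hDsf.natFactorization_le_one r
        have h2 : 1 ≤ (m * (m + 2 * n)).factorization r := by
          have : 0 < (m * (m + 2 * n)).factorization r := by
            apply hrp.factorization_pos_of_dvd hmq0
            rcases hr2 with rfl | rfl
            · exact Dvd.intro _ rfl
            · exact Dvd.intro_left _ rfl
          omega
        omega
      · simp [Nat.factorization_eq_zero_of_not_dvd hrD]
    · simp [Nat.factorization_eq_zero_of_not_prime _ hrp]
  have hm2 : (m : ℚ_[2]) ≠ 0 := Nat.cast_ne_zero.2 hm.ne'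
  by_cases hmD : m ∣ d.natAbs
  · by_cases hqD : (m + 2 * n) ∣ d.natAbs
    · -- d = ± m (m + 2n) : excluded
      exfalso
      have hcop : Nat.Coprime m (m + 2 * n) :=
        (Nat.coprime_primes hm_prime hm2n_prime).2 hmq_ne
      have hmqD : m * (m + 2 * n) ∣ d.natAbs := hcop.mul_dvd_of_dvd_of_dvd hmD hqD
      have hDeq : d.natAbs = m * (m + 2 * n) := Nat.dvd_antisymm hDmq hmqD
      rcases Int.natAbs_eq d with h | h
      · exact hd2 (by rw [h, hDeq]; push_cast; ring)
      · exact hd3 (by rw [h, hDeq]; push_cast; ring)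
    · -- d = ± m
      have hcop : Nat.Coprime d.natAbs (m + 2 * n) :=
        ((Nat.Prime.coprime_iff_not_dvd hm2n_prime).2 hqD).symm
      have hDm : d.natAbs ∣ m := hcop.dvd_of_dvd_mul_right hDmq
      have hDeq : d.natAbs = m := Nat.dvd_antisymm hDm hmD
      rcases Int.natAbs_eq d with h | h
      · -- d = m
        have hdm : d = (m : ℤ) := by rw [h, hDeq]
        have hd8 : ((d : ZMod 8) = 3) := by rw [hdm]; exact hm8'
        have hc8 : (((-((m : ℤ) ^ 2 * ((m + 2 * n : ℕ) : ℤ)) : ℤ) : ZMod 8) = 5) := by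
          rw [Int.cast_neg, Int.cast_mul, Int.cast_pow, Int.cast_natCast,
            Int.cast_natCast, hm8, hq8]; decide
        have hc := case_two d (-((m : ℤ) ^ 2 * ((m + 2 * n : ℕ) : ℤ))) (m : ℤ)
          (Or.inl ⟨hd8, hc8⟩) hm8'
        refine ⟨2, Nat.prime_two, hc.1, ?_⟩
        rintro ⟨x, y, hxy⟩
        refine hc.2 ⟨x, y, ?_⟩
        have hdq : (d : ℚ_[2]) ≠ 0 := Int.cast_ne_zero.2 hd0
        have hconv : (m : ℚ_[2]) ^ 3 * ((m : ℚ_[2]) + 2 * (n : ℚ_[2])) / (d : ℚ_[2])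
            = -((-((m : ℤ) ^ 2 * ((m + 2 * n : ℕ) : ℤ)) : ℤ) : ℚ_[2]) := by
          rw [div_eq_iff hdq, hdm]
          push_cast
          ring
        rw [hxy, hconv]
        push_cast
        ring
      · -- d = -m
        have hdm : d = -(m : ℤ) := by rw [h, hDeq]
        have hd8 : ((d : ZMod 8) = 5) := by
          rw [hdm, Int.cast_neg, Int.cast_natCast, hm8]; decide
        have hc8 : ((((m : ℤ) ^ 2 * ((m + 2 * n : ℕ) : ℤ) : ℤ)) : ZMod 8) = 3 := by
          rw [Int.cast_mul, Int.cast_pow, Int.cast_natCast, Int.cast_natCast, hm8, hq8]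
          decide
        have hc := case_two d ((m : ℤ) ^ 2 * ((m + 2 * n : ℕ) : ℤ)) (m : ℤ)
          (Or.inr ⟨hd8, hc8⟩) hm8'
        refine ⟨2, Nat.prime_two, hc.1, ?_⟩
        rintro ⟨x, y, hxy⟩
        refine hc.2 ⟨x, y, ?_⟩
        have hdq : (d : ℚ_[2]) ≠ 0 := Int.cast_ne_zero.2 hd0
        have hconv : (m : ℚ_[2]) ^ 3 * ((m : ℚ_[2]) + 2 * (n : ℚ_[2])) / (d : ℚ_[2])
            = -(((m : ℤ) ^ 2 * ((m + 2 * n : ℕ) : ℤ) : ℤ) : ℚ_[2]) := by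
          rw [div_eq_iff hdq, hdm]
          push_cast
          ring
        rw [hxy, hconv]
        push_cast
        ring
  · by_cases hqD : (m + 2 * n) ∣ d.natAbs
    · -- d = ± (m + 2n)
      have hcop : Nat.Coprime d.natAbs m :=
        ((Nat.Prime.coprime_iff_not_dvd hm_prime).2 hmD).symm
      have hDq : d.natAbs ∣ (m + 2 * n) := hcop.dvd_of_dvd_mul_left hDmq
      have hDeq : d.natAbs = m + 2 * n := Nat.dvd_antisymm hDq hqD
      have hq2 : ((m + 2 * n : ℕ) : ℚ_[2]) ≠ 0 := Nat.cast_ne_zero.2 (by omega)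
      rcases Int.natAbs_eq d with h | h
      · -- d = m + 2n
        have hdm : d = ((m + 2 * n : ℕ) : ℤ) := by rw [h, hDeq]
        have hd8 : ((d : ZMod 8) = 3) := by rw [hdm, Int.cast_natCast, hq8]
        have hc8 : (((-((m : ℤ) ^ 3) : ℤ)) : ZMod 8) = 5 := by
          rw [Int.cast_neg, Int.cast_pow, Int.cast_natCast, hm8]; decide
        have hc := case_two d (-((m : ℤ) ^ 3)) (m : ℤ) (Or.inl ⟨hd8, hc8⟩) hm8'
        refine ⟨2, Nat.prime_two, hc.1, ?_⟩
        rintro ⟨x, y, hxy⟩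
        refine hc.2 ⟨x, y, ?_⟩
        have hdq : (d : ℚ_[2]) ≠ 0 := Int.cast_ne_zero.2 hd0
        have hconv : (m : ℚ_[2]) ^ 3 * ((m : ℚ_[2]) + 2 * (n : ℚ_[2])) / (d : ℚ_[2])
            = -((-((m : ℤ) ^ 3) : ℤ) : ℚ_[2]) := by
          rw [div_eq_iff hdq, hdm]
          push_cast
          ring
        rw [hxy, hconv]
        push_cast
        ring
      · -- d = -(m + 2n)
        have hdm : d = -((m + 2 * n : ℕ) : ℤ) := by rw [h, hDeq]
        have hd8 : ((d : ZMod 8) = 5) := by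
          rw [hdm, Int.cast_neg, Int.cast_natCast, hq8]; decide
        have hc8 : ((((m : ℤ) ^ 3 : ℤ)) : ZMod 8) = 3 := by
          rw [Int.cast_pow, Int.cast_natCast, hm8]; decide
        have hc := case_two d ((m : ℤ) ^ 3) (m : ℤ) (Or.inr ⟨hd8, hc8⟩) hm8'
        refine ⟨2, Nat.prime_two, hc.1, ?_⟩
        rintro ⟨x, y, hxy⟩
        refine hc.2 ⟨x, y, ?_⟩
        have hdq : (d : ℚ_[2]) ≠ 0 := Int.cast_ne_zero.2 hd0
        have hconv : (m : ℚ_[2]) ^ 3 * ((m : ℚ_[2]) + 2 * (n : ℚ_[2])) / (d : ℚ_[2])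
            = -(((m : ℤ) ^ 3 : ℤ) : ℚ_[2]) := by
          rw [div_eq_iff hdq, hdm]
          push_cast
          ring
        rw [hxy, hconv]
        push_cast
        ring
    · -- d = ± 1
      have hD1 : d.natAbs = 1 := by
        rw [Nat.eq_one_iff_not_exists_prime_dvd]
        intro r hrp hrD
        by_cases hrm : r = m
        · exact hmD (hrm ▸ hrD)
        · exact hqD ((hex r hrp hrD hrm) ▸ hrD)
      have hdm : d = -1 := by
        rcases Int.natAbs_eq d with h | h
        · exact absurd (by rw [h, hD1]; rfl) hd1
        · rw [h, hD1]; rfl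
      haveI : Fact m.Prime := ⟨hm_prime⟩
      have hc := case_neg_one m (m + 2 * n) (by omega)
        (by
          intro h
          exact hmq_ne ((Nat.prime_dvd_prime_iff_eq hm_prime hm2n_prime).1 h))
        (by omega)
      refine ⟨m, hm_prime, ?_, ?_⟩
      · rintro ⟨z, hz⟩
        exact hc.1 ⟨z, by rw [hz, hdm]; push_cast; ring⟩
      · rintro ⟨x, y, hxy⟩
        refine hc.2 ⟨x, y, ?_⟩
        have hdq : (d : ℚ_[m]) ≠ 0 := Int.cast_ne_zero.2 hd0
        have hconv : (m : ℚ_[m]) ^ 3 * ((m : ℚ_[m]) + 2 * (n : ℚ_[m])) / (d : ℚ_[m])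
            = -((m : ℚ_[m]) ^ 3 * ((m + 2 * n : ℕ) : ℚ_[m])) := by
          rw [div_eq_iff hdq, hdm]
          push_cast
          ring
        rw [hxy, hconv]
        push_cast [hdm]
        ring
end
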